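/- arXiv:1811.12849 — 12 statements merged into one kernel-verified Lean document; each statement's English description precedes it below -/
import Mathlib

section
/- Let H be a Hilbert space and A, B bounded operators on H. If range(A) ⊆ range(B), then there exists a constant μ ≥ 0 such that AA* ≤ μ BB*. -/
variable {H : Type*} [NormedAddCommGroup H] [InnerProductSpace ℂ H] [CompleteSpace H]

/-- Douglas' theorem, (1) ⇒ (2): if `range A ⊆ range B`, then `AA* ≤ μ BB*`
for some `μ ≥ 0`, where the inequality means
`⟨AA*x, x⟩ ≤ μ ⟨BB*x, x⟩` for all `x`. -/
theorem douglas_range_subset_imp_ineq (A B : H →L[ℂ] H)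
    (h : Set.range A ⊆ Set.range B) :
    ∃ μ : ℝ, 0 ≤ μ ∧ ∀ x : H,
      (@inner ℂ _ _ (A (ContinuousLinearMap.adjoint A x)) x).re ≤
        μ * (@inner ℂ _ _ (B (ContinuousLinearMap.adjoint B x)) x).re := by
  classical
  set K : Submodule ℂ H := LinearMap.ker (B : H →ₗ[ℂ] H) with hK
  haveI : CompleteSpace K := (ContinuousLinearMap.isClosed_ker B).completeSpace_coe
  -- the "solution operator" C₀ : for each x, the unique y ∈ Kᗮ with B y = A x
  have exz : ∀ x : H, ∃ z, B z = A x := fun x => h (Set.mem_range_self x)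
  set C0 : H → H := fun x => (Submodule.orthogonalProjection Kᗮ (Classical.choose (exz x)) : H)
    with hC0
  have hCmem : ∀ x, C0 x ∈ Kᗮ := fun x => (Submodule.orthogonalProjection Kᗮ _).2
  have hBC : ∀ x, B (C0 x) = A x := by
    intro x
    have hz := Classical.choose_spec (exz x)
    set z := Classical.choose (exz x) with hzdef
    have hsub : z - (Submodule.orthogonalProjection Kᗮ z : H) ∈ Kᗮᗮ :=
      Submodule.sub_starProjection_mem_orthogonal (K := Kᗮ) z
    rw [Submodule.orthogonal_orthogonal] at hsub
    have : B (z - (Submodule.orthogonalProjection Kᗮ z : H)) = 0 := hsub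
    have : B z - B ((Submodule.orthogonalProjection Kᗮ z : H)) = 0 := by
      rw [← map_sub]; exact this
    have hBeq : B ((Submodule.orthogonalProjection Kᗮ z : H)) = B z := by
      linear_combination (norm := abel) -this
    rw [hC0]; simp only []
    rw [hBeq, hz]
  have huniq : ∀ y y' : H, y ∈ Kᗮ → y' ∈ Kᗮ → B y = B y' → y = y' := by
    intro y y' hy hy' hBy
    have hmem : y - y' ∈ K ⊓ Kᗮ :=
      ⟨by simp [hK, LinearMap.mem_ker, map_sub, hBy], Submodule.sub_mem _ hy hy'⟩
    rw [Submodule.inf_orthogonal_eq_bot, Submodule.mem_bot, sub_eq_zero] at hmem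
    exact hmem
  -- C₀ is linear
  let C : H →ₗ[ℂ] H :=
    { toFun := C0
      map_add' := fun x y =>
        huniq _ _ (hCmem _) (Submodule.add_mem _ (hCmem x) (hCmem y))
          (by simp [hBC, map_add])
      map_smul' := fun c x =>
        huniq _ _ (hCmem _) (Submodule.smul_mem _ c (hCmem x))
          (by simp [hBC, map_smul]) }
  -- its graph is closed, hence C is continuous
  have hgraph : (C.graph : Set (H × H)) = {p : H × H | p.2 ∈ Kᗮ ∧ B p.2 = A p.1} := by
    ext p
    simp only [SetLike.mem_coe, LinearMap.mem_graph_iff, Set.mem_setOf_eq]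
    constructor
    · intro he
      rw [he]
      exact ⟨hCmem p.1, hBC p.1⟩
    · rintro ⟨h1, h2⟩
      exact huniq _ _ h1 (hCmem _) (by rw [h2]; exact (hBC p.1).symm)
  have hclosed : IsClosed (C.graph : Set (H × H)) := by
    rw [hgraph]
    exact ((Submodule.isClosed_orthogonal K).preimage continuous_snd).inter
      (isClosed_eq (B.continuous.comp continuous_snd) (A.continuous.comp continuous_fst))
  have hCc : Continuous C := C.continuous_of_isClosed_graph hclosed
  let Ccl : H →L[ℂ] H := ⟨C, hCc⟩
  have hfact : A = B.comp Ccl := by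
    ext x
    exact (hBC x).symm
  -- conclude
  refine ⟨‖ContinuousLinearMap.adjoint Ccl‖ ^ 2, by positivity, fun x => ?_⟩
  have hadj : ContinuousLinearMap.adjoint A =
      (ContinuousLinearMap.adjoint Ccl).comp (ContinuousLinearMap.adjoint B) := by
    rw [hfact, ContinuousLinearMap.adjoint_comp]
  have key : ∀ (T : H →L[ℂ] H) (x : H),
      (@inner ℂ _ _ (T (ContinuousLinearMap.adjoint T x)) x).re =
        ‖ContinuousLinearMap.adjoint T x‖ ^ 2 := by
    intro T x
    rw [← ContinuousLinearMap.adjoint_inner_right]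
    exact inner_self_eq_norm_sq (𝕜 := ℂ) _
  rw [key A x, key B x, hadj]
  have hle : ‖(ContinuousLinearMap.adjoint Ccl) ((ContinuousLinearMap.adjoint B) x)‖ ≤
      ‖ContinuousLinearMap.adjoint Ccl‖ * ‖ContinuousLinearMap.adjoint B x‖ :=
    (ContinuousLinearMap.adjoint Ccl).le_opNorm _
  calc ‖((ContinuousLinearMap.adjoint Ccl).comp (ContinuousLinearMap.adjoint B)) x‖ ^ 2
      = ‖(ContinuousLinearMap.adjoint Ccl) ((ContinuousLinearMap.adjoint B) x)‖ ^ 2 := rfl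
    _ ≤ (‖ContinuousLinearMap.adjoint Ccl‖ * ‖ContinuousLinearMap.adjoint B x‖) ^ 2 := by
        exact pow_le_pow_left₀ (norm_nonneg _) hle 2
    _ = ‖ContinuousLinearMap.adjoint Ccl‖ ^ 2 * ‖ContinuousLinearMap.adjoint B x‖ ^ 2 := by ring
end

section
/- Let H be a Hilbert space and A, B bounded operators on H. If AA* ≤ μ BB* for some μ ≥ 0, then there exists a bounded operator C on H such that A = BC. -/
variable {H : Type*} [NormedAddCommGroup H] [InnerProductSpace ℂ H] [CompleteSpace H]

set_option maxHeartbeats 1000000 in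
open ContinuousLinearMap in
/-- Douglas' theorem, (2) ⇒ (3): if `AA* ≤ μ BB*` for some `μ ≥ 0`, then
there exists a bounded operator `C` with `A = BC`. -/
theorem douglas_ineq_imp_factorization (A B : H →L[ℂ] H) (μ : ℝ) (hμ : 0 ≤ μ)
    (h : ∀ x : H,
      (@inner ℂ _ _ (A (ContinuousLinearMap.adjoint A x)) x).re ≤
        μ * (@inner ℂ _ _ (B (ContinuousLinearMap.adjoint B x)) x).re) :
    ∃ C : H →L[ℂ] H, A = B.comp C := by
  classical
  -- Key norm inequality : ‖A* x‖ ≤ √μ ‖B* x‖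
  have hnormsq : ∀ (T : H →L[ℂ] H) (x : H),
      (@inner ℂ _ _ (T (adjoint T x)) x).re = ‖adjoint T x‖ ^ 2 := by
    intro T x
    have h1 := adjoint_inner_left (𝕜 := ℂ) (adjoint T) x (adjoint T x)
    rw [adjoint_adjoint] at h1
    rw [h1]
    have h2 := inner_self_eq_norm_sq (𝕜 := ℂ) (adjoint T x)
    simpa using h2
  have key : ∀ x : H, ‖adjoint A x‖ ≤ Real.sqrt μ * ‖adjoint B x‖ := by
    intro x
    have h1 := h x
    rw [hnormsq A x, hnormsq B x] at h1
    have h2 : ‖adjoint A x‖ ^ 2 ≤ (Real.sqrt μ * ‖adjoint B x‖) ^ 2 := by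
      rw [mul_pow, Real.sq_sqrt hμ]; exact h1
    calc ‖adjoint A x‖ = Real.sqrt (‖adjoint A x‖ ^ 2) :=
          (Real.sqrt_sq (norm_nonneg _)).symm
      _ ≤ Real.sqrt ((Real.sqrt μ * ‖adjoint B x‖) ^ 2) := Real.sqrt_le_sqrt h2
      _ = Real.sqrt μ * ‖adjoint B x‖ := Real.sqrt_sq (by positivity)
  -- kernel inclusion
  have hker : LinearMap.ker ((adjoint B : H →L[ℂ] H) : H →ₗ[ℂ] H) ≤
      LinearMap.ker ((adjoint A : H →L[ℂ] H) : H →ₗ[ℂ] H) := by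
    intro x hx
    rw [LinearMap.mem_ker] at hx ⊢
    simp only [ContinuousLinearMap.coe_coe] at hx ⊢
    have := key x
    rw [hx, norm_zero, mul_zero] at this
    exact norm_le_zero_iff.mp this
  -- The subspace S = range B*
  set S : Submodule ℂ H :=
    LinearMap.range ((adjoint B : H →L[ℂ] H) : H →ₗ[ℂ] H) with hS
  -- T₀ : S →ₗ H  with  T₀ (B* x) = A* x
  have hkerl : LinearMap.ker ((adjoint B : H →L[ℂ] H) : H →ₗ[ℂ] H) ≤
      LinearMap.ker ((adjoint A : H →L[ℂ] H) : H →ₗ[ℂ] H) := hker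
  set T₀ : S →ₗ[ℂ] H :=
    ((LinearMap.ker ((adjoint B : H →L[ℂ] H) : H →ₗ[ℂ] H)).liftQ
        ((adjoint A : H →L[ℂ] H) : H →ₗ[ℂ] H) hkerl).comp
      (LinearMap.quotKerEquivRange
        ((adjoint B : H →L[ℂ] H) : H →ₗ[ℂ] H)).symm.toLinearMap with hT₀
  have hT₀apply : ∀ (x : H) (hx : adjoint B x ∈ S), T₀ ⟨adjoint B x, hx⟩ = adjoint A x := by
    intro x hx
    have : (LinearMap.quotKerEquivRange
        ((adjoint B : H →L[ℂ] H) : H →ₗ[ℂ] H)).symm ⟨adjoint B x, hx⟩ =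
        Submodule.Quotient.mk x := by
      rw [LinearEquiv.symm_apply_eq]
      rfl
    rw [hT₀]
    simp only [LinearMap.coe_comp, Function.comp_apply, LinearEquiv.coe_coe]
    rw [this, Submodule.liftQ_apply]
    rfl
  have hT₀bound : ∀ u : S, ‖T₀ u‖ ≤ Real.sqrt μ * ‖u‖ := by
    intro u
    obtain ⟨x, hx⟩ := u.2
    have hmem : adjoint B x ∈ S := ⟨x, rfl⟩
    have hu : u = ⟨adjoint B x, hmem⟩ := Subtype.ext hx.symm
    rw [hu, hT₀apply x hmem]
    simpa using key x
  set T : S →L[ℂ] H := T₀.mkContinuous (Real.sqrt μ) hT₀bound with hT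
  have hTapply : ∀ (x : H) (hx : adjoint B x ∈ S), T ⟨adjoint B x, hx⟩ = adjoint A x := by
    intro x hx
    simpa [hT] using hT₀apply x hx
  -- closure of S
  set Sb : Submodule ℂ H := S.topologicalClosure with hSb
  have hSSb : S ≤ Sb := S.le_topologicalClosure
  -- inclusion map
  set e : S →L[ℂ] Sb := ContinuousLinearMap.codRestrict S.subtypeL Sb
    (fun u => hSSb u.2) with he
  have he_isom : Isometry e := by
    intro u v
    rfl
  have he_ind : IsUniformInducing e := he_isom.isUniformInducing
  have he_dense : DenseRange e := by
    rintro ⟨y, hy⟩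
    have hy' : y ∈ closure (S : Set H) := hy
    obtain ⟨u, hu, hlim⟩ := mem_closure_iff_seq_limit.mp hy'
    refine mem_closure_of_tendsto (b := Filter.atTop) (f := fun n => e ⟨u n, hu n⟩) ?_
      (Filter.Eventually.of_forall fun n => Set.mem_range_self _)
    rw [tendsto_subtype_rng]
    exact hlim
  -- complete space instance for Sb
  haveI : CompleteSpace Sb := S.isClosed_topologicalClosure.completeSpace_coe
  -- extension
  set Te : Sb →L[ℂ] H := T.extend e with hTe
  set D : H →L[ℂ] H := Te.comp ((Sb.orthogonalProjectionOnto : H →L[ℂ] Sb)) with hD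
  have hDapply : ∀ x : H, D (adjoint B x) = adjoint A x := by
    intro x
    have hmemS : adjoint B x ∈ S := ⟨x, rfl⟩
    have hmem : adjoint B x ∈ Sb := hSSb hmemS
    have hproj : Sb.orthogonalProjectionOnto (adjoint B x) = ⟨adjoint B x, hmem⟩ := by
      exact Subtype.ext (Submodule.starProjection_eq_self_iff.mpr hmem)
    have hee : e ⟨adjoint B x, hmemS⟩ = ⟨adjoint B x, hmem⟩ := rfl
    calc D (adjoint B x) = Te (Sb.orthogonalProjectionOnto (adjoint B x)) := rfl
      _ = Te (e ⟨adjoint B x, hmemS⟩) := by rw [hproj, hee]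
      _ = T ⟨adjoint B x, hmemS⟩ := ContinuousLinearMap.extend_eq _ he_dense he_ind _
      _ = adjoint A x := hTapply x hmemS
  refine ⟨adjoint D, ?_⟩
  have hcomp : D.comp (adjoint B) = adjoint A := by
    ext x
    exact hDapply x
  have := congrArg adjoint hcomp
  rw [adjoint_comp, adjoint_adjoint, adjoint_adjoint] at this
  exact this.symm
end

section
/- Let H be a Hilbert space and A, B bounded operators on H with range(A) ⊆ range(B). Then there exists a unique bounded operator C on H with A = BC, null(C) = null(A), and range(C) ⊆ closure(range(B*)). Moreover ‖C‖² = inf{ μ ≥ 0 : AA* ≤ μ BB* }. -/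
variable {H : Type*} [NormedAddCommGroup H] [InnerProductSpace ℂ H] [CompleteSpace H]

local notation "⟪" x ", " y "⟫" => @inner ℂ _ _ x y

open ContinuousLinearMap in
lemma douglas_aux_orth (B : H →L[ℂ] H) :
    (LinearMap.range (adjoint B : H →ₗ[ℂ] H))ᗮ = LinearMap.ker (B : H →ₗ[ℂ] H) := by
  ext x
  simp only [Submodule.mem_orthogonal, LinearMap.mem_range, LinearMap.mem_ker,
    forall_exists_index, coe_coe]
  constructor
  · intro hx
    have := hx (adjoint B (B x)) (B x) rfl
    rw [adjoint_inner_left] at this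
    exact inner_self_eq_zero.mp this
  · rintro hx u y rfl
    rw [adjoint_inner_left, hx, inner_zero_right]

open ContinuousLinearMap in
lemma douglas_aux_closure (B : H →L[ℂ] H) :
    closure (Set.range (adjoint B)) = ((LinearMap.ker (B : H →ₗ[ℂ] H))ᗮ : Submodule ℂ H) := by
  have : (Set.range (adjoint B)) = ((LinearMap.range (adjoint B : H →ₗ[ℂ] H) : Submodule ℂ H) : Set H) := rfl
  rw [this, ← Submodule.topologicalClosure_coe, ← Submodule.orthogonal_orthogonal_eq_closure,
    douglas_aux_orth]

open ContinuousLinearMap in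
lemma douglas_aux_bound (B : H →L[ℂ] H) (z : H) (c : ℝ) (hc : 0 ≤ c)
    (hz : z ∈ closure (Set.range (adjoint B)))
    (hb : ∀ x : H, ‖⟪z, adjoint B x⟫‖ ≤ c * ‖adjoint B x‖) : ‖z‖ ≤ c := by
  have hset : closure (Set.range (adjoint B)) ⊆ {w : H | ‖⟪z, w⟫‖ ≤ c * ‖w‖} := by
    apply closure_minimal
    · rintro w ⟨x, rfl⟩; exact hb x
    · exact isClosed_le ((continuous_const.inner continuous_id).norm)
        (continuous_const.mul continuous_norm)
  have h2 : ‖(⟪z, z⟫ : ℂ)‖ ≤ c * ‖z‖ := hset hz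
  have h3 : ‖z‖ * ‖z‖ ≤ c * ‖z‖ := by
    calc ‖z‖ * ‖z‖ = RCLike.re (⟪z, z⟫ : ℂ) := (inner_self_eq_norm_mul_norm z).symm
      _ ≤ ‖(⟪z, z⟫ : ℂ)‖ := RCLike.re_le_norm _
      _ ≤ c * ‖z‖ := h2
  rcases eq_or_lt_of_le (norm_nonneg z) with h0 | h0
  · rw [← h0]; exact hc
  · exact le_of_mul_le_mul_right h3 h0

/-- Douglas' theorem, full form: if `range A ⊆ range B` then there is a unique
bounded `C` with `A = BC`, `null C = null A` and `range C ⊆ closure (range B*)`;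
moreover `‖C‖² = inf {μ ≥ 0 | AA* ≤ μ BB*}`. -/
theorem douglas_factorization_unique (A B : H →L[ℂ] H)
    (h : Set.range A ⊆ Set.range B) :
    ∃ C : H →L[ℂ] H,
      (A = B.comp C ∧ LinearMap.ker (C : H →ₗ[ℂ] H) = LinearMap.ker (A : H →ₗ[ℂ] H) ∧
        Set.range C ⊆ closure (Set.range (ContinuousLinearMap.adjoint B))) ∧
      ‖C‖ ^ 2 = sInf {μ : ℝ | 0 ≤ μ ∧ ∀ x : H,
        (@inner ℂ _ _ (A (ContinuousLinearMap.adjoint A x)) x).re ≤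
          μ * (@inner ℂ _ _ (B (ContinuousLinearMap.adjoint B x)) x).re} ∧
      ∀ C' : H →L[ℂ] H,
        (A = B.comp C' ∧ LinearMap.ker (C' : H →ₗ[ℂ] H) = LinearMap.ker (A : H →ₗ[ℂ] H) ∧
          Set.range C' ⊆ closure (Set.range (ContinuousLinearMap.adjoint B))) →
        C' = C := by
  classical
  set K : Submodule ℂ H := (LinearMap.ker (B : H →ₗ[ℂ] H))ᗮ with hK
  haveI : CompleteSpace K := (Submodule.isClosed_orthogonal _).completeSpace_coe
  have hKbot : Kᗮ = LinearMap.ker (B : H →ₗ[ℂ] H) := by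
    rw [hK, Submodule.orthogonal_orthogonal_eq_closure,
      IsClosed.submodule_topologicalClosure_eq (ContinuousLinearMap.isClosed_ker B)]
  have hmem : ∀ y : H, A y ∈ Set.range B := fun y => h (Set.mem_range_self y)
  set f : H → H := fun y => (K.orthogonalProjectionOnto ((hmem y).choose) : H) with hf
  have hfK : ∀ y, f y ∈ K := fun y => (K.orthogonalProjectionOnto _).2
  have hBf : ∀ y, B (f y) = A y := by
    intro y
    have hv : B ((hmem y).choose) = A y := (hmem y).choose_spec
    have hsub : (hmem y).choose - f y ∈ Kᗮ :=
      Submodule.sub_starProjection_mem_orthogonal (K := K) _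
    rw [hKbot] at hsub
    have : B ((hmem y).choose - f y) = 0 := hsub
    rw [map_sub, sub_eq_zero] at this
    rw [← this, hv]
  -- uniqueness characterization
  have huniq : ∀ y z, z ∈ K → B z = A y → z = f y := by
    intro y z hzK hzB
    have hker : z - f y ∈ LinearMap.ker (B : H →ₗ[ℂ] H) := by
      simp [LinearMap.mem_ker, map_sub, hzB, hBf y]
    have hKmem : z - f y ∈ K := K.sub_mem hzK (hfK y)
    rw [hK] at hKmem
    have h0 : (⟪z - f y, z - f y⟫ : ℂ) = 0 :=
      (Submodule.mem_orthogonal _ _).mp hKmem (z - f y) hker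
    have := inner_self_eq_zero.mp h0
    rw [sub_eq_zero] at this; exact this
  -- linearity
  have hadd : ∀ y y', f (y + y') = f y + f y' := by
    intro y y'
    refine (huniq (y + y') (f y + f y') (K.add_mem (hfK y) (hfK y')) ?_).symm
    rw [map_add, hBf, hBf, map_add]
  have hsmul : ∀ (c : ℂ) y, f (c • y) = c • f y := by
    intro c y
    refine (huniq (c • y) (c • f y) (K.smul_mem c (hfK y)) ?_).symm
    rw [map_smul, hBf, map_smul]
  set g : H →ₗ[ℂ] H := { toFun := f, map_add' := hadd, map_smul' := hsmul } with hg
  have hcont : Continuous g := by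
    apply LinearMap.continuous_of_seq_closed_graph
    intro u x y hux huy
    have hyK : y ∈ K :=
      (Submodule.isClosed_orthogonal _).mem_of_tendsto huy
        (Filter.Eventually.of_forall fun n => hfK (u n))
    have hBy : B y = A x := by
      have h1 : Filter.Tendsto (fun n => B (g (u n))) Filter.atTop (nhds (B y)) :=
        (B.continuous.tendsto y).comp huy
      have h2 : (fun n => B (g (u n))) = fun n => A (u n) := by
        funext n; exact hBf (u n)
      rw [h2] at h1
      have h3 : Filter.Tendsto (fun n => A (u n)) Filter.atTop (nhds (A x)) :=
        (A.continuous.tendsto x).comp hux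
      exact tendsto_nhds_unique h1 h3
    exact huniq x y hyK hBy
  set C : H →L[ℂ] H := ⟨g, hcont⟩ with hC
  have hCapp : ∀ y, C y = f y := fun y => rfl
  -- the three structural properties
  have hfact : A = B.comp C := by
    ext y; exact (hBf y).symm
  have hkerC : LinearMap.ker (C : H →ₗ[ℂ] H) = LinearMap.ker (A : H →ₗ[ℂ] H) := by
    ext y
    simp only [LinearMap.mem_ker, ContinuousLinearMap.coe_coe, hCapp]
    constructor
    · intro hy; rw [← hBf y, hy, map_zero]
    · intro hy
      exact (huniq y 0 K.zero_mem (by rw [map_zero, hy])).symm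
  have hrangeC : Set.range C ⊆ closure (Set.range (ContinuousLinearMap.adjoint B)) := by
    rw [douglas_aux_closure]
    rintro _ ⟨y, rfl⟩
    exact hfK y
  -- the re computation
  have hre : ∀ (T : H →L[ℂ] H) (x : H),
      (⟪T (ContinuousLinearMap.adjoint T x), x⟫).re = ‖ContinuousLinearMap.adjoint T x‖ ^ 2 := by
    intro T x
    rw [← ContinuousLinearMap.adjoint_inner_right T (ContinuousLinearMap.adjoint T x) x]
    have : (⟪ContinuousLinearMap.adjoint T x, ContinuousLinearMap.adjoint T x⟫ : ℂ).re
        = RCLike.re (⟪ContinuousLinearMap.adjoint T x, ContinuousLinearMap.adjoint T x⟫ : ℂ) := rfl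
    rw [this, inner_self_eq_norm_sq]
  set S : Set ℝ := {μ : ℝ | 0 ≤ μ ∧ ∀ x : H,
      (⟪A (ContinuousLinearMap.adjoint A x), x⟫).re ≤
        μ * (⟪B (ContinuousLinearMap.adjoint B x), x⟫).re} with hS
  have hCmem : ‖C‖ ^ 2 ∈ S := by
    refine ⟨by positivity, fun x => ?_⟩
    rw [hre A x, hre B x]
    have hle : ‖ContinuousLinearMap.adjoint A x‖
        ≤ ‖C‖ * ‖ContinuousLinearMap.adjoint B x‖ := by
      rw [hfact, ContinuousLinearMap.adjoint_comp]
      calc ‖(ContinuousLinearMap.adjoint C ∘L ContinuousLinearMap.adjoint B) x‖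
          = ‖ContinuousLinearMap.adjoint C (ContinuousLinearMap.adjoint B x)‖ := rfl
        _ ≤ ‖ContinuousLinearMap.adjoint C‖ * ‖ContinuousLinearMap.adjoint B x‖ :=
            ContinuousLinearMap.le_opNorm _ _
        _ = ‖C‖ * ‖ContinuousLinearMap.adjoint B x‖ := by
            rw [LinearIsometryEquiv.norm_map]
    calc ‖ContinuousLinearMap.adjoint A x‖ ^ 2
        ≤ (‖C‖ * ‖ContinuousLinearMap.adjoint B x‖) ^ 2 :=
          pow_le_pow_left₀ (norm_nonneg _) hle 2
      _ = ‖C‖ ^ 2 * ‖ContinuousLinearMap.adjoint B x‖ ^ 2 := by ring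
  have hlb : ∀ μ ∈ S, ‖C‖ ^ 2 ≤ μ := by
    intro μ hμ
    obtain ⟨hμ0, hμ2⟩ := hμ
    have key : ∀ x, ‖ContinuousLinearMap.adjoint A x‖
        ≤ Real.sqrt μ * ‖ContinuousLinearMap.adjoint B x‖ := by
      intro x
      have h1 := hμ2 x
      rw [hre A x, hre B x] at h1
      have h2 : ‖ContinuousLinearMap.adjoint A x‖ ^ 2
          ≤ (Real.sqrt μ * ‖ContinuousLinearMap.adjoint B x‖) ^ 2 := by
        rw [mul_pow, Real.sq_sqrt hμ0]; exact h1
      calc ‖ContinuousLinearMap.adjoint A x‖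
          = Real.sqrt (‖ContinuousLinearMap.adjoint A x‖ ^ 2) :=
            (Real.sqrt_sq (norm_nonneg _)).symm
        _ ≤ Real.sqrt ((Real.sqrt μ * ‖ContinuousLinearMap.adjoint B x‖) ^ 2) :=
            Real.sqrt_le_sqrt h2
        _ = Real.sqrt μ * ‖ContinuousLinearMap.adjoint B x‖ :=
            Real.sqrt_sq (by positivity)
    have hCy : ∀ y, ‖C y‖ ≤ Real.sqrt μ * ‖y‖ := by
      intro y
      refine douglas_aux_bound B (C y) (Real.sqrt μ * ‖y‖) (by positivity)
        (hrangeC (Set.mem_range_self y)) fun x => ?_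
      have he : (⟪C y, ContinuousLinearMap.adjoint B x⟫ : ℂ)
          = ⟪y, ContinuousLinearMap.adjoint A x⟫ := by
        rw [ContinuousLinearMap.adjoint_inner_right, ContinuousLinearMap.adjoint_inner_right]
        have : B (C y) = A y := hBf y
        rw [this]
      rw [he]
      calc ‖(⟪y, ContinuousLinearMap.adjoint A x⟫ : ℂ)‖
          ≤ ‖y‖ * ‖ContinuousLinearMap.adjoint A x‖ := norm_inner_le_norm _ _
        _ ≤ ‖y‖ * (Real.sqrt μ * ‖ContinuousLinearMap.adjoint B x‖) :=
            mul_le_mul_of_nonneg_left (key x) (norm_nonneg y)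
        _ = Real.sqrt μ * ‖y‖ * ‖ContinuousLinearMap.adjoint B x‖ := by ring
    have hCn : ‖C‖ ≤ Real.sqrt μ := C.opNorm_le_bound (Real.sqrt_nonneg μ) hCy
    calc ‖C‖ ^ 2 ≤ Real.sqrt μ ^ 2 := pow_le_pow_left₀ (norm_nonneg C) hCn 2
      _ = μ := Real.sq_sqrt hμ0
  refine ⟨C, ⟨hfact, hkerC, hrangeC⟩,
    le_antisymm (le_csInf ⟨_, hCmem⟩ hlb) (csInf_le ⟨0, fun μ hμ => hμ.1⟩ hCmem), ?_⟩
  rintro C' ⟨hfac', -, hrange'⟩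
  ext y
  have h1 : C' y ∈ K := by
    have := hrange' (Set.mem_range_self y)
    rwa [douglas_aux_closure] at this
  have h2 : B (C' y) = A y := by rw [hfac']; rfl
  exact huniq y (C' y) h1 h2
end

section
/- Let A be a closed densely defined operator from H₁ to H₂ and B = A† its Moore–Penrose inverse. Then A(I + A*A)⁻¹ = B*(I + BB*)⁻¹. -/
variable {H₁ H₂ : Type*}
  [NormedAddCommGroup H₁] [InnerProductSpace ℂ H₁] [CompleteSpace H₁]
  [NormedAddCommGroup H₂] [InnerProductSpace ℂ H₂] [CompleteSpace H₂]

/-- `B` is the Moore–Penrose inverse of the closed densely defined operator `A`: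
`B` is closed, `D(B) = R(A) ⊕ N(A*)`, `N(B) = N(A*)`, `ABA = A`, `BAB = B`,
`AB ⊆ P_{closure R(A)}` and `BA ⊆ P_{closure R(B)}`. -/
def IsMPInv (A : H₁ →ₗ.[ℂ] H₂) (B : H₂ →ₗ.[ℂ] H₁) : Prop :=
  B.IsClosed ∧
  (∀ y : H₂, y ∈ B.domain ↔
    ∃ (x : A.domain) (z : A.adjoint.domain), A.adjoint z = 0 ∧ y = A x + ↑z) ∧
  (∀ (y : H₂) (hy : y ∈ B.domain), B ⟨y, hy⟩ = 0 ↔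
    ∃ hy' : y ∈ A.adjoint.domain, A.adjoint ⟨y, hy'⟩ = 0) ∧
  (∀ x : A.domain, A x ∈ B.domain) ∧
  (∀ y : B.domain, (B y : H₁) ∈ A.domain) ∧
  (∀ (x : A.domain) (h1 : A x ∈ B.domain) (h2 : B ⟨A x, h1⟩ ∈ A.domain),
    A ⟨B ⟨A x, h1⟩, h2⟩ = A x) ∧
  (∀ (y : B.domain) (h1 : (B y : H₁) ∈ A.domain) (h2 : A ⟨B y, h1⟩ ∈ B.domain),
    B ⟨A ⟨B y, h1⟩, h2⟩ = B y) ∧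
  (∀ (y : B.domain) (h : (B y : H₁) ∈ A.domain),
    A ⟨B y, h⟩ ∈ (LinearMap.range A.toFun).topologicalClosure ∧
      (y : H₂) - A ⟨B y, h⟩ ∈ ((LinearMap.range A.toFun).topologicalClosure)ᗮ) ∧
  (∀ (x : A.domain) (h : (A x : H₂) ∈ B.domain),
    B ⟨A x, h⟩ ∈ (LinearMap.range B.toFun).topologicalClosure ∧
      (x : H₁) - B ⟨A x, h⟩ ∈ ((LinearMap.range B.toFun).topologicalClosure)ᗮ)

/-- For a closed densely defined operator `A` with Moore–Penrose inverse `B`,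
`A(I + A*A)⁻¹ = B*(I + BB*)⁻¹`. Here `RA = (I + A*A)⁻¹` and
`RB = (I + BB*)⁻¹` are the everywhere defined bounded resolvents. -/
theorem pmap_resolvent_identity
    (A : H₁ →ₗ.[ℂ] H₂) (B : H₂ →ₗ.[ℂ] H₁)
    (hA : A.IsClosed) (hAd : Dense (A.domain : Set H₁))
    (hB : IsMPInv A B)
    (RA : H₁ →L[ℂ] H₁)
    (hRA1 : ∀ x : H₁, RA x ∈ A.domain)
    (hRA2 : ∀ (x : H₁) (h1 : RA x ∈ A.domain), A ⟨RA x, h1⟩ ∈ A.adjoint.domain)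
    (hRA : ∀ (x : H₁) (h1 : RA x ∈ A.domain) (h2 : A ⟨RA x, h1⟩ ∈ A.adjoint.domain),
      RA x + A.adjoint ⟨A ⟨RA x, h1⟩, h2⟩ = x)
    (RB : H₁ →L[ℂ] H₁)
    (hRB1 : ∀ x : H₁, RB x ∈ B.adjoint.domain)
    (hRB2 : ∀ (x : H₁) (h1 : RB x ∈ B.adjoint.domain), B.adjoint ⟨RB x, h1⟩ ∈ B.domain)
    (hRB : ∀ (x : H₁) (h1 : RB x ∈ B.adjoint.domain) (h2 : B.adjoint ⟨RB x, h1⟩ ∈ B.domain),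
      RB x + B ⟨B.adjoint ⟨RB x, h1⟩, h2⟩ = x) :
    ∀ (x : H₁) (h1 : RA x ∈ A.domain) (h1' : RB x ∈ B.adjoint.domain),
      A ⟨RA x, h1⟩ = B.adjoint ⟨RB x, h1'⟩ := by
  obtain ⟨hBc, hdom, hker, hAB, hBA, hABA, hBAB, hPA, hPB⟩ := hB
  -- notation
  set K := (LinearMap.range A.toFun).topologicalClosure with hK
  set L := (LinearMap.range B.toFun).topologicalClosure with hL
  -- `B.domain` is dense
  have hBd : Dense (B.domain : Set H₂) := by
    rw [Submodule.dense_iff_topologicalClosure_eq_top, Submodule.eq_top_iff']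
    intro y
    obtain ⟨k, hk, z, hz, rfl⟩ := K.exists_add_mem_mem_orthogonal y
    have hzA : z ∈ A.adjoint.domain := by
      apply LinearPMap.mem_adjoint_domain_of_exists
      exact ⟨0, fun x' => by
        rw [inner_zero_left]
        exact ((Submodule.mem_orthogonal' K z).mp hz _
          ((LinearMap.range A.toFun).le_topologicalClosure (LinearMap.mem_range_self A.toFun x'))).symm⟩
    have hzval : A.adjoint ⟨z, hzA⟩ = 0 := by
      refine LinearPMap.adjoint_apply_eq hAd _ (fun x' => ?_)
      rw [inner_zero_left]
      exact ((Submodule.mem_orthogonal' K z).mp hz _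
        ((LinearMap.range A.toFun).le_topologicalClosure (LinearMap.mem_range_self A.toFun x'))).symm
    have hzB : z ∈ B.domain := by
      rw [hdom z]
      exact ⟨0, ⟨z, hzA⟩, hzval, by simp⟩
    have hkB : k ∈ B.domain.topologicalClosure := by
      apply Submodule.topologicalClosure_mono _ hk
      intro w hw
      obtain ⟨x', rfl⟩ := hw
      exact hAB x'
    exact add_mem hkB (B.domain.le_topologicalClosure hzB)
  intro x h1 h1'
  have h2 : A ⟨RA x, h1⟩ ∈ A.adjoint.domain := hRA2 x h1
  have hxu : RA x + A.adjoint ⟨A ⟨RA x, h1⟩, h2⟩ = x := hRA x h1 h2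
  have h2' : B.adjoint ⟨RB x, h1'⟩ ∈ B.domain := hRB2 x h1'
  have hxv : RB x + B ⟨B.adjoint ⟨RB x, h1'⟩, h2'⟩ = x := hRB x h1' h2'
  have hAuK : (A ⟨RA x, h1⟩ : H₂) ∈ K :=
    (LinearMap.range A.toFun).le_topologicalClosure (LinearMap.mem_range_self A.toFun _)
  -- Step 1: for every y ∈ D(B), ⟪A u, y⟫ = ⟪x - u, B y⟫
  have claim1 : ∀ y : B.domain,
      (inner ℂ (A ⟨RA x, h1⟩) (y : H₂) : ℂ) = inner ℂ (x - RA x) (B y) := by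
    intro y
    have hBy : (B y : H₁) ∈ A.domain := hBA y
    have e1 : (inner ℂ (A.adjoint ⟨A ⟨RA x, h1⟩, h2⟩) ((⟨B y, hBy⟩ : A.domain) : H₁) : ℂ)
        = inner ℂ (A ⟨RA x, h1⟩ : H₂) (A ⟨B y, hBy⟩) :=
      LinearPMap.adjoint_isFormalAdjoint hAd ⟨A ⟨RA x, h1⟩, h2⟩ ⟨B y, hBy⟩
    have hxmu : x - RA x = A.adjoint ⟨A ⟨RA x, h1⟩, h2⟩ :=
      sub_eq_iff_eq_add'.mpr hxu.symm
    have horth : (inner ℂ (A ⟨RA x, h1⟩ : H₂) ((y : H₂) - A ⟨B y, hBy⟩) : ℂ) = 0 :=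
      (Submodule.mem_orthogonal K _).mp (hPA y hBy).2 _ hAuK
    have : (inner ℂ (A ⟨RA x, h1⟩ : H₂) (A ⟨B y, hBy⟩) : ℂ)
        = inner ℂ (A ⟨RA x, h1⟩ : H₂) (y : H₂) := by
      have := inner_sub_right (𝕜 := ℂ) (A ⟨RA x, h1⟩ : H₂) (y : H₂) (A ⟨B y, hBy⟩)
      rw [horth] at this
      linear_combination this
    rw [hxmu, e1, this]
  -- x - RA x ∈ D(B†) and B†(x - RA x) = A (RA x)
  have hmem : x - RA x ∈ B.adjoint.domain :=
    LinearPMap.mem_adjoint_domain_of_exists _ ⟨A ⟨RA x, h1⟩, claim1⟩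
  have hval : B.adjoint ⟨x - RA x, hmem⟩ = A ⟨RA x, h1⟩ :=
    LinearPMap.adjoint_apply_eq hBd _ claim1
  -- z := RB x - (x - RA x)
  have hz : RB x - (x - RA x) ∈ B.adjoint.domain := sub_mem h1' hmem
  have hzval : B.adjoint ⟨RB x - (x - RA x), hz⟩
      = B.adjoint ⟨RB x, h1'⟩ - A ⟨RA x, h1⟩ := by
    have : (⟨RB x - (x - RA x), hz⟩ : B.adjoint.domain)
        = ⟨RB x, h1'⟩ - ⟨x - RA x, hmem⟩ := rfl
    rw [this, LinearPMap.map_sub, hval]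
  have hBz : B.adjoint ⟨RB x - (x - RA x), hz⟩ ∈ B.domain := by
    rw [hzval]; exact sub_mem h2' (hAB ⟨RA x, h1⟩)
  -- q := B (B† z)
  have hq : B ⟨B.adjoint ⟨RB x - (x - RA x), hz⟩, hBz⟩
      = B ⟨B.adjoint ⟨RB x, h1'⟩, h2'⟩ - B ⟨A ⟨RA x, h1⟩, hAB ⟨RA x, h1⟩⟩ := by
    have : (⟨B.adjoint ⟨RB x - (x - RA x), hz⟩, hBz⟩ : B.domain)
        = ⟨B.adjoint ⟨RB x, h1'⟩, h2'⟩ - ⟨A ⟨RA x, h1⟩, hAB ⟨RA x, h1⟩⟩ :=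
      Subtype.ext (by simp [hzval])
    rw [this, LinearPMap.map_sub]
  -- n := RA x - B(A (RA x)), orthogonal to L
  have hnL : RA x - B ⟨A ⟨RA x, h1⟩, hAB ⟨RA x, h1⟩⟩ ∈ Lᗮ :=
    (hPB ⟨RA x, h1⟩ (hAB ⟨RA x, h1⟩)).2
  -- z + q = n
  have hzq : (RB x - (x - RA x)) + B ⟨B.adjoint ⟨RB x - (x - RA x), hz⟩, hBz⟩
      = RA x - B ⟨A ⟨RA x, h1⟩, hAB ⟨RA x, h1⟩⟩ := by
    rw [hq]
    have h3 : B ⟨B.adjoint ⟨RB x, h1'⟩, h2'⟩ = x - RB x := eq_sub_iff_add_eq'.mpr hxv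
    rw [h3]; abel
  -- inner product computation: ⟪B†z, B†z⟫ = ⟪z, q⟫
  have key : (inner ℂ (B.adjoint ⟨RB x - (x - RA x), hz⟩)
      (B.adjoint ⟨RB x - (x - RA x), hz⟩) : ℂ)
      = inner ℂ (RB x - (x - RA x)) (B ⟨B.adjoint ⟨RB x - (x - RA x), hz⟩, hBz⟩) :=
    LinearPMap.adjoint_isFormalAdjoint hBd ⟨RB x - (x - RA x), hz⟩
      ⟨B.adjoint ⟨RB x - (x - RA x), hz⟩, hBz⟩
  have hqL : (B ⟨B.adjoint ⟨RB x - (x - RA x), hz⟩, hBz⟩ : H₁) ∈ L :=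
    (LinearMap.range B.toFun).le_topologicalClosure (LinearMap.mem_range_self B.toFun _)
  have horthn : (inner ℂ (RA x - B ⟨A ⟨RA x, h1⟩, hAB ⟨RA x, h1⟩⟩)
      (B ⟨B.adjoint ⟨RB x - (x - RA x), hz⟩, hBz⟩) : ℂ) = 0 :=
    (Submodule.mem_orthogonal' L _).mp hnL _ hqL
  -- conclude B† z = 0
  have hzero : B.adjoint ⟨RB x - (x - RA x), hz⟩ = 0 := by
    set w := B.adjoint ⟨RB x - (x - RA x), hz⟩ with hw
    set q := B ⟨B.adjoint ⟨RB x - (x - RA x), hz⟩, hBz⟩ with hqq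
    have hzq' : RB x - (x - RA x) = (RA x - B ⟨A ⟨RA x, h1⟩, hAB ⟨RA x, h1⟩⟩) - q :=
      eq_sub_iff_add_eq.mpr hzq
    have : (inner ℂ w w : ℂ) + inner ℂ q q = 0 := by
      rw [key, hzq', inner_sub_left, horthn]
      ring
    rw [inner_self_eq_norm_sq_to_K, inner_self_eq_norm_sq_to_K] at this
    have hre : ‖w‖ ^ 2 + ‖q‖ ^ 2 = 0 :=
      Complex.ofReal_eq_zero.mp (by rw [Complex.ofReal_add, Complex.ofReal_pow, Complex.ofReal_pow]; exact this)
    have : ‖w‖ = 0 := by nlinarith [sq_nonneg ‖w‖, sq_nonneg ‖q‖, norm_nonneg w, norm_nonneg q]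
    exact norm_eq_zero.mp this
  rw [hzval] at hzero
  exact (sub_eq_zero.mp hzero).symm
end

section
/- Let A be a closed densely defined operator from H₁ to H₂ and B = A† its Moore–Penrose inverse. Then (I + A*A)⁻¹ + (I + BB*)⁻¹ = I + P, where P is the orthogonal projection onto null(B*). -/
variable {H₁ H₂ : Type*}
  [NormedAddCommGroup H₁] [InnerProductSpace ℂ H₁] [CompleteSpace H₁]
  [NormedAddCommGroup H₂] [InnerProductSpace ℂ H₂] [CompleteSpace H₂]

local notation "⟪" x ", " y "⟫" => @inner ℂ _ _ x y

set_option maxHeartbeats 1000000 in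
/-- For a closed densely defined `A` with Moore–Penrose inverse `B`,
`(I + A*A)⁻¹ + (I + BB*)⁻¹ = I + P` where `P` is the orthogonal projection
onto `null B*`. -/
theorem pmap_resolvent_sum
    (A : H₁ →ₗ.[ℂ] H₂) (B : H₂ →ₗ.[ℂ] H₁)
    (hA : A.IsClosed) (hAd : Dense (A.domain : Set H₁))
    (hB : IsMPInv A B)
    (RA : H₁ →L[ℂ] H₁)
    (hRA1 : ∀ x : H₁, RA x ∈ A.domain)
    (hRA2 : ∀ (x : H₁) (h1 : RA x ∈ A.domain), A ⟨RA x, h1⟩ ∈ A.adjoint.domain)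
    (hRA : ∀ (x : H₁) (h1 : RA x ∈ A.domain) (h2 : A ⟨RA x, h1⟩ ∈ A.adjoint.domain),
      RA x + A.adjoint ⟨A ⟨RA x, h1⟩, h2⟩ = x)
    (RB : H₁ →L[ℂ] H₁)
    (hRB1 : ∀ x : H₁, RB x ∈ B.adjoint.domain)
    (hRB2 : ∀ (x : H₁) (h1 : RB x ∈ B.adjoint.domain), B.adjoint ⟨RB x, h1⟩ ∈ B.domain)
    (hRB : ∀ (x : H₁) (h1 : RB x ∈ B.adjoint.domain) (h2 : B.adjoint ⟨RB x, h1⟩ ∈ B.domain),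
      RB x + B ⟨B.adjoint ⟨RB x, h1⟩, h2⟩ = x)
    (P : H₁ →L[ℂ] H₁)
    (hP1 : ∀ x : H₁, ∃ h : P x ∈ B.adjoint.domain, B.adjoint ⟨P x, h⟩ = 0)
    (hP2 : ∀ (x y : H₁) (hy : y ∈ B.adjoint.domain),
      B.adjoint ⟨y, hy⟩ = 0 → @inner ℂ _ _ (x - P x) y = 0) :
    RA + RB = 1 + P := by
  obtain ⟨hBc, hBdom, hBker, hABdom, hBAdom, hABA, hBAB, hABproj, hBAproj⟩ := hB
  -- `B` is densely defined
  have hBdense : Dense (B.domain : Set H₂) := by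
    rw [Submodule.dense_iff_topologicalClosure_eq_top,
      Submodule.topologicalClosure_eq_top_iff, Submodule.eq_bot_iff]
    intro y hy
    have hy' : ∀ d ∈ B.domain, ⟪d, y⟫ = 0 := (Submodule.mem_orthogonal _ _).1 hy
    have hyA : y ∈ A.adjoint.domain := by
      refine LinearPMap.mem_adjoint_domain_of_exists _ ⟨0, fun z => ?_⟩
      rw [inner_zero_left, eq_comm, inner_eq_zero_symm]
      exact hy' _ (hABdom z)
    have hval : A.adjoint ⟨y, hyA⟩ = 0 := by
      refine LinearPMap.adjoint_apply_eq hAd _ (fun z => ?_)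
      rw [inner_zero_left, eq_comm, inner_eq_zero_symm]
      exact hy' _ (hABdom z)
    have hyB : y ∈ B.domain := by
      refine (hBdom y).2 ⟨0, ⟨y, hyA⟩, hval, ?_⟩
      simp [LinearPMap.map_zero]
    have := hy' y hyB
    rwa [inner_self_eq_zero] at this
  have hAform := LinearPMap.adjoint_isFormalAdjoint hAd
  have hBform := LinearPMap.adjoint_isFormalAdjoint hBdense
  -- membership in the orthogonal complement of `closure (range B)`
  have memSBo : ∀ n : H₁,
      n ∈ ((LinearMap.range B.toFun).topologicalClosure)ᗮ ↔
        ∀ v : B.domain, ⟪(B v : H₁), n⟫ = 0 := by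
    intro n
    rw [← Submodule.orthogonal_orthogonal_eq_closure, Submodule.triorthogonal_eq_orthogonal,
      Submodule.mem_orthogonal]
    constructor
    · intro h v; exact h _ ⟨v, rfl⟩
    · rintro h w ⟨v, rfl⟩; exact h v
  -- `Sᗮ ⊆ N(B*)`
  have N2b : ∀ n : H₁, n ∈ ((LinearMap.range B.toFun).topologicalClosure)ᗮ →
      ∃ h : n ∈ B.adjoint.domain, B.adjoint ⟨n, h⟩ = 0 := by
    intro n hn
    have hn' := (memSBo n).1 hn
    have hmem : n ∈ B.adjoint.domain := by
      refine LinearPMap.mem_adjoint_domain_of_exists _ ⟨0, fun v => ?_⟩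
      rw [inner_zero_left, eq_comm, inner_eq_zero_symm]
      exact hn' v
    refine ⟨hmem, LinearPMap.adjoint_apply_eq hBdense _ (fun v => ?_)⟩
    rw [inner_zero_left, eq_comm, inner_eq_zero_symm]
    exact hn' v
  -- `N(B*) ⊆ Sᗮ`
  have N2a : ∀ (n : H₁) (hn : n ∈ B.adjoint.domain), B.adjoint ⟨n, hn⟩ = 0 →
      n ∈ ((LinearMap.range B.toFun).topologicalClosure)ᗮ := by
    intro n hn h0
    refine (memSBo n).2 (fun v => ?_)
    rw [inner_eq_zero_symm]
    have := hBform ⟨n, hn⟩ v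
    rwa [h0, inner_zero_left, eq_comm] at this
  -- `Sᗮ ⊆ N(A)` (uses closedness of `A`)
  have N1 : ∀ n : H₁, n ∈ ((LinearMap.range B.toFun).topologicalClosure)ᗮ →
      ∃ h : n ∈ A.domain, A ⟨n, h⟩ = 0 := by
    intro n hn
    set S := (LinearMap.range B.toFun).topologicalClosure with hS
    haveI : CompleteSpace S := (Submodule.isClosed_topologicalClosure _).completeSpace_coe
    have key : ∀ z : A.domain, ((z : H₁) - (S.orthogonalProjectionOnto (z : H₁) : H₁), (0 : H₂)) ∈
        A.graph := by
      intro z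
      have h1 : (A z : H₂) ∈ B.domain := hABdom z
      have h2 : (B ⟨A z, h1⟩ : H₁) ∈ A.domain := hBAdom ⟨A z, h1⟩
      have hproj := hBAproj z h1
      have heq : (S.orthogonalProjectionOnto (z : H₁) : H₁) = B ⟨A z, h1⟩ :=
        Submodule.eq_starProjection_of_mem_orthogonal hproj.1 hproj.2
      rw [heq]
      rw [LinearPMap.mem_graph_iff]
      refine ⟨z - ⟨B ⟨A z, h1⟩, h2⟩, rfl, ?_⟩
      rw [LinearPMap.map_sub]
      rw [hABA z h1 h2]
      simp
    -- approximate `n` by elements of `A.domain`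
    have hseq : ∀ ε > 0, ∃ p ∈ (A.graph : Set (H₁ × H₂)), dist (n, (0 : H₂)) p < ε := by
      intro ε hε
      set f : H₁ → H₁ × H₂ := fun w => (w - (S.orthogonalProjectionOnto w : H₁), (0 : H₂)) with hf
      have hcont : Continuous f := by
        apply Continuous.prodMk
        · exact continuous_id.sub (continuous_subtype_val.comp
            (S.orthogonalProjectionOnto).continuous)
        · exact continuous_const
      have hPn : (S.orthogonalProjectionOnto n : H₁) = 0 := by
        rw [Submodule.orthogonalProjectionOnto_apply_of_mem_orthogonal hn,
          Submodule.coe_zero]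
      have hfn : f n = (n, (0 : H₂)) := by
        simp only [hf, hPn, sub_zero]
      have hopen : IsOpen (f ⁻¹' Metric.ball ((n : H₁), (0 : H₂)) ε) :=
        Metric.isOpen_ball.preimage hcont
      have hne : (f ⁻¹' Metric.ball ((n : H₁), (0 : H₂)) ε).Nonempty := by
        refine ⟨n, ?_⟩
        simp only [Set.mem_preimage, hfn, Metric.mem_ball, dist_self]
        exact hε
      obtain ⟨w, hwA, hw⟩ := hAd.exists_mem_open hopen hne
      refine ⟨f w, key ⟨w, hwA⟩, ?_⟩
      rw [dist_comm]
      exact hw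
    have : (n, (0 : H₂)) ∈ (A.graph : Set (H₁ × H₂)) := by
      rw [← hA.closure_eq]
      exact Metric.mem_closure_iff.2 hseq
    rw [SetLike.mem_coe, LinearPMap.mem_graph_iff] at this
    obtain ⟨z, hz1, hz2⟩ := this
    have hz1' : (z : H₁) = n := hz1
    have hmem : n ∈ A.domain := hz1' ▸ z.2
    refine ⟨hmem, ?_⟩
    have hzz : (⟨n, hmem⟩ : A.domain) = z := Subtype.ext hz1'.symm
    rw [hzz, hz2]
  -- main argument, pointwise
  ext x
  simp only [ContinuousLinearMap.add_apply, ContinuousLinearMap.one_apply]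
  set u : A.domain := ⟨RA x, hRA1 x⟩ with hu
  have hAud : (A u : H₂) ∈ A.adjoint.domain := hRA2 x (hRA1 x)
  set v : A.adjoint.domain := ⟨A u, hAud⟩ with hv
  have hxeq : RA x + A.adjoint v = x := hRA x (hRA1 x) hAud
  have hAuB : (A u : H₂) ∈ B.domain := hABdom u
  -- step L2 : `A† v ∈ dom B†` and `B† (A† v) = A u`
  have key2 : ∀ d : B.domain, ⟪(A u : H₂), (d : H₂)⟫ = ⟪A.adjoint v, (B d : H₁)⟫ := by
    intro d
    have hBd : (B d : H₁) ∈ A.domain := hBAdom d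
    have h1 := hAform v ⟨(B d : H₁), hBd⟩
    have hproj := hABproj d hBd
    have hmemSA : (A u : H₂) ∈ (LinearMap.range A.toFun).topologicalClosure :=
      Submodule.le_topologicalClosure _ (LinearMap.mem_range.mpr ⟨u, rfl⟩)
    have h2 : ⟪(A u : H₂), (d : H₂) - A ⟨(B d : H₁), hBd⟩⟫ = 0 :=
      (Submodule.mem_orthogonal _ _).1 hproj.2 _ hmemSA
    rw [inner_sub_right, sub_eq_zero] at h2
    calc ⟪(A u : H₂), (d : H₂)⟫ = ⟪(A u : H₂), A ⟨(B d : H₁), hBd⟩⟫ := h2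
      _ = ⟪(v : H₂), A ⟨(B d : H₁), hBd⟩⟫ := rfl
      _ = ⟪A.adjoint v, ((⟨(B d : H₁), hBd⟩ : A.domain) : H₁)⟫ := h1.symm
      _ = ⟪A.adjoint v, (B d : H₁)⟫ := rfl
  have hw_mem : (A.adjoint v : H₁) ∈ B.adjoint.domain :=
    LinearPMap.mem_adjoint_domain_of_exists _ ⟨A u, fun d => key2 d⟩
  have hw_val : B.adjoint ⟨A.adjoint v, hw_mem⟩ = A u :=
    LinearPMap.adjoint_apply_eq hBdense _ (fun d => key2 d)
  -- step L1 : `P x = u - B (A u)`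
  set m : H₁ := (u : H₁) - B ⟨A u, hAuB⟩ with hm
  have hm_orth : m ∈ ((LinearMap.range B.toFun).topologicalClosure)ᗮ := (hBAproj u hAuB).2
  obtain ⟨hmB, hmB0⟩ := N2b m hm_orth
  obtain ⟨hPxd, hPx0⟩ := hP1 x
  have horth : ∀ (n : H₁) (hn : n ∈ B.adjoint.domain),
      B.adjoint ⟨n, hn⟩ = 0 → ⟪x - m, n⟫ = 0 := by
    intro n hn h0
    have hnS := N2a n hn h0
    obtain ⟨hnA, hnA0⟩ := N1 n hnS
    have hxm : x - m = (A.adjoint v : H₁) + B ⟨A u, hAuB⟩ := by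
      rw [hm, ← hxeq]
      have huval : (u : H₁) = RA x := rfl
      rw [huval]
      abel
    rw [hxm, inner_add_left]
    have e1 : ⟪(A.adjoint v : H₁), n⟫ = 0 := by
      have h3 := hAform v ⟨n, hnA⟩
      rwa [hnA0, inner_zero_right] at h3
    have e2 : ⟪(B ⟨A u, hAuB⟩ : H₁), n⟫ = 0 :=
      (Submodule.mem_orthogonal _ _).1 hnS _ ((hBAproj u hAuB).1)
    rw [e1, e2, add_zero]
  have hq_mem : P x - m ∈ B.adjoint.domain := Submodule.sub_mem _ hPxd hmB
  have hq0 : B.adjoint ⟨P x - m, hq_mem⟩ = 0 := by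
    have hsplit : (⟨P x - m, hq_mem⟩ : B.adjoint.domain) =
        ⟨P x, hPxd⟩ - ⟨m, hmB⟩ := rfl
    rw [hsplit, LinearPMap.map_sub, hPx0, hmB0, sub_zero]
  have hPm : P x = m := by
    have h1 : ⟪x - m, P x - m⟫ = 0 := horth _ hq_mem hq0
    have h2 : ⟪x - P x, P x - m⟫ = 0 := hP2 x _ hq_mem hq0
    have h3 : ⟪P x - m, P x - m⟫ = 0 := by
      have hd : (⟪P x - m, P x - m⟫ : ℂ) =
          ⟪x - m, P x - m⟫ - ⟪x - P x, P x - m⟫ := by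
        rw [← inner_sub_left]
        congr 1
        abel
      rw [hd, h1, h2, sub_zero]
    rw [inner_self_eq_zero, sub_eq_zero] at h3
    exact h3
  -- `w := A† v + P x` satisfies `(I + B B†) w = x`
  have hw1 : (A.adjoint v : H₁) + P x ∈ B.adjoint.domain := Submodule.add_mem _ hw_mem hPxd
  have hwval : B.adjoint ⟨(A.adjoint v : H₁) + P x, hw1⟩ = A u := by
    have hsplit : (⟨(A.adjoint v : H₁) + P x, hw1⟩ : B.adjoint.domain) =
        ⟨A.adjoint v, hw_mem⟩ + ⟨P x, hPxd⟩ := rfl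
    rw [hsplit, LinearPMap.map_add, hw_val, hPx0, add_zero]
  have hwx : ((A.adjoint v : H₁) + P x) + B ⟨A u, hAuB⟩ = x := by
    rw [hPm, hm, ← hxeq]
    have huval : (u : H₁) = RA x := rfl
    rw [huval]
    abel
  -- uniqueness : `RB x = A† v + P x`
  have hr1 := hRB1 x
  have hr2 := hRB2 x hr1
  have hrEq := hRB x hr1 hr2
  set y : H₁ := RB x - ((A.adjoint v : H₁) + P x) with hy
  have hy1 : y ∈ B.adjoint.domain := Submodule.sub_mem _ hr1 hw1
  have hcB : (B.adjoint ⟨RB x, hr1⟩ : H₂) - A u ∈ B.domain := Submodule.sub_mem _ hr2 hAuB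
  have hcval : B.adjoint ⟨y, hy1⟩ = B.adjoint ⟨RB x, hr1⟩ - A u := by
    have hsplit : (⟨y, hy1⟩ : B.adjoint.domain) =
        ⟨RB x, hr1⟩ - ⟨(A.adjoint v : H₁) + P x, hw1⟩ := rfl
    rw [hsplit, LinearPMap.map_sub, hwval]
  have hBc' : B ⟨B.adjoint ⟨RB x, hr1⟩ - A u, hcB⟩ =
      B ⟨B.adjoint ⟨RB x, hr1⟩, hr2⟩ - B ⟨A u, hAuB⟩ := by
    have hsplit : (⟨B.adjoint ⟨RB x, hr1⟩ - A u, hcB⟩ : B.domain) =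
        ⟨B.adjoint ⟨RB x, hr1⟩, hr2⟩ - ⟨A u, hAuB⟩ := rfl
    rw [hsplit, LinearPMap.map_sub]
  have hzero : y + B ⟨B.adjoint ⟨RB x, hr1⟩ - A u, hcB⟩ = 0 := by
    rw [hBc', hy]
    have hre : (RB x - ((A.adjoint v : H₁) + P x)) +
        ((B ⟨B.adjoint ⟨RB x, hr1⟩, hr2⟩ : H₁) - B ⟨A u, hAuB⟩) =
        (RB x + B ⟨B.adjoint ⟨RB x, hr1⟩, hr2⟩) -
          (((A.adjoint v : H₁) + P x) + B ⟨A u, hAuB⟩) := by abel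
    rw [hre, hrEq, hwx, sub_self]
  have hinner : ⟪y, y⟫ + ⟪(B.adjoint ⟨RB x, hr1⟩ : H₂) - A u,
      (B.adjoint ⟨RB x, hr1⟩ : H₂) - A u⟫ = 0 := by
    have h1 := hBform ⟨y, hy1⟩ (⟨B.adjoint ⟨RB x, hr1⟩ - A u, hcB⟩ : B.domain)
    rw [hcval] at h1
    have h2 : ⟪y, y + B ⟨B.adjoint ⟨RB x, hr1⟩ - A u, hcB⟩⟫ = 0 := by
      rw [hzero, inner_zero_right]
    rw [inner_add_right] at h2
    rw [← h1] at h2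
    exact h2
  have hy0 : y = 0 := by
    set c := (B.adjoint ⟨RB x, hr1⟩ : H₂) - A u with hc
    have hre' : ‖y‖ ^ 2 + ‖c‖ ^ 2 = 0 := by
      have h4 := congrArg Complex.re hinner
      rw [Complex.add_re, Complex.zero_re] at h4
      rw [← @inner_self_eq_norm_sq ℂ, ← @inner_self_eq_norm_sq ℂ]
      exact h4
    have h5 : ‖y‖ ^ 2 = 0 := by
      have hy2 := sq_nonneg ‖y‖
      have hc2 := sq_nonneg ‖c‖
      linarith
    have hny : ‖y‖ = 0 := by
      exact pow_eq_zero_iff two_ne_zero |>.mp h5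
    rwa [norm_eq_zero] at hny
  have hRBx : RB x = (A.adjoint v : H₁) + P x := by
    have := sub_eq_zero.mp hy0
    exact this
  rw [hRBx]
  have hfin : RA x + ((A.adjoint v : H₁) + P x) = (RA x + A.adjoint v) + P x := by abel
  rw [hfin, hxeq]
end

section
/- Let A be a closed densely defined operator from H₁ to H₂ with A* injective, and B = A† its Moore–Penrose inverse. Then (I + AA*)⁻¹ + (I + B*B)⁻¹ = I on H₂. -/
variable {H₁ H₂ : Type*}
  [NormedAddCommGroup H₁] [InnerProductSpace ℂ H₁] [CompleteSpace H₁]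
  [NormedAddCommGroup H₂] [InnerProductSpace ℂ H₂] [CompleteSpace H₂]

local notation "⟪" x ", " y "⟫" => @inner ℂ _ _ x y

/-- For a closed densely defined `A` with injective adjoint `A*` and
Moore–Penrose inverse `B`, `(I + AA*)⁻¹ + (I + B*B)⁻¹ = I` on `H₂`. -/
theorem pmap_resolvent_sum_of_injective_adjoint
    (A : H₁ →ₗ.[ℂ] H₂) (B : H₂ →ₗ.[ℂ] H₁)
    (hA : A.IsClosed) (hAd : Dense (A.domain : Set H₁))
    (hB : IsMPInv A B)
    (hinj : ∀ y z : A.adjoint.domain, A.adjoint y = A.adjoint z → (y : H₂) = z)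
    (RA : H₂ →L[ℂ] H₂)
    (hRA1 : ∀ y : H₂, RA y ∈ A.adjoint.domain)
    (hRA2 : ∀ (y : H₂) (h1 : RA y ∈ A.adjoint.domain), A.adjoint ⟨RA y, h1⟩ ∈ A.domain)
    (hRA : ∀ (y : H₂) (h1 : RA y ∈ A.adjoint.domain) (h2 : A.adjoint ⟨RA y, h1⟩ ∈ A.domain),
      RA y + A ⟨A.adjoint ⟨RA y, h1⟩, h2⟩ = y)
    (RB : H₂ →L[ℂ] H₂)
    (hRB1 : ∀ y : H₂, RB y ∈ B.domain)
    (hRB2 : ∀ (y : H₂) (h1 : RB y ∈ B.domain), B ⟨RB y, h1⟩ ∈ B.adjoint.domain)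
    (hRB : ∀ (y : H₂) (h1 : RB y ∈ B.domain) (h2 : B ⟨RB y, h1⟩ ∈ B.adjoint.domain),
      RB y + B.adjoint ⟨B ⟨RB y, h1⟩, h2⟩ = y) :
    RA + RB = 1 := by
  obtain ⟨-, -, -, hABmem, hBAmem, -, -, hABproj, hBAproj⟩ := hB
  have hAadj : A.adjoint.IsFormalAdjoint A := LinearPMap.adjoint_isFormalAdjoint hAd
  -- every element orthogonal to the range of `A` is zero
  have hker : ∀ w : H₂, w ∈ ((LinearMap.range A.toFun).topologicalClosure)ᗮ → w = 0 := by
    intro w hw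
    have hw' : ∀ s : A.domain, ⟪w, A s⟫ = 0 := by
      intro s
      have hm : A s ∈ (LinearMap.range A.toFun).topologicalClosure :=
        Submodule.le_topologicalClosure _ ⟨s, rfl⟩
      exact (Submodule.mem_orthogonal' _ _).1 hw _ hm
    have hmem : w ∈ A.adjoint.domain :=
      LinearPMap.mem_adjoint_domain_of_exists _ ⟨0, fun s => by simp [hw' s]⟩
    have hval : A.adjoint ⟨w, hmem⟩ = 0 :=
      LinearPMap.adjoint_apply_eq hAd _ (fun s => by simp [hw' s])
    have h0 : A.adjoint ⟨w, hmem⟩ = A.adjoint 0 := by simpa using hval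
    simpa using hinj ⟨w, hmem⟩ 0 h0
  -- the range of `A` is dense
  have hRAdense : Dense ((LinearMap.range A.toFun : Submodule ℂ H₂) : Set H₂) := by
    set S := (LinearMap.range A.toFun : Submodule ℂ H₂).topologicalClosure with hS
    have hSbot : Sᗮ = ⊥ := (Submodule.eq_bot_iff _).2 fun w hw => hker w hw
    haveI : CompleteSpace S :=
      (LinearMap.range A.toFun : Submodule ℂ H₂).isClosed_topologicalClosure.completeSpace_coe
    have hStop : S = ⊤ := Submodule.orthogonal_eq_bot_iff.1 hSbot
    have hc : closure ((LinearMap.range A.toFun : Submodule ℂ H₂) : Set H₂) = Set.univ := by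
      rw [← Submodule.topologicalClosure_coe, ← hS, hStop]; rfl
    exact dense_iff_closure_eq.2 hc
  -- the domain of `B` is dense
  have hBd : Dense (B.domain : Set H₂) := by
    refine hRAdense.mono ?_
    rintro y ⟨s, rfl⟩
    exact hABmem s
  have hBadj : B.adjoint.IsFormalAdjoint B := LinearPMap.adjoint_isFormalAdjoint hBd
  -- uniqueness of solutions of `u + A A* u = y`
  have huniq : ∀ (u₁ u₂ : H₂) (m₁ : u₁ ∈ A.adjoint.domain) (m₂ : u₂ ∈ A.adjoint.domain)
      (n₁ : A.adjoint ⟨u₁, m₁⟩ ∈ A.domain) (n₂ : A.adjoint ⟨u₂, m₂⟩ ∈ A.domain),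
      u₁ + A ⟨A.adjoint ⟨u₁, m₁⟩, n₁⟩ = u₂ + A ⟨A.adjoint ⟨u₂, m₂⟩, n₂⟩ → u₁ = u₂ := by
    intro u₁ u₂ m₁ m₂ n₁ n₂ heq
    set d : A.adjoint.domain := ⟨u₁, m₁⟩ - ⟨u₂, m₂⟩ with hd
    have hdc : (d : H₂) = u₁ - u₂ := rfl
    have hAdsub : A.adjoint d = A.adjoint ⟨u₁, m₁⟩ - A.adjoint ⟨u₂, m₂⟩ := map_sub _ _ _
    have hmemt : A.adjoint d ∈ A.domain := by rw [hAdsub]; exact sub_mem n₁ n₂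
    set t : A.domain := ⟨A.adjoint d, hmemt⟩ with ht
    have htsub : t = (⟨A.adjoint ⟨u₁, m₁⟩, n₁⟩ : A.domain) - ⟨A.adjoint ⟨u₂, m₂⟩, n₂⟩ :=
      Subtype.ext (by simp [ht, hAdsub])
    have hAt : A t = A ⟨A.adjoint ⟨u₁, m₁⟩, n₁⟩ - A ⟨A.adjoint ⟨u₂, m₂⟩, n₂⟩ := by
      rw [htsub]; exact A.map_sub _ _
    have hsum : (u₁ - u₂) + A t = 0 := by
      rw [hAt, sub_add_sub_comm, heq, sub_self]
    have hinner : ⟪(d : H₂), (u₁ - u₂) + A t⟫ = 0 := by rw [hsum, inner_zero_right]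
    have hAtd : ⟪(d : H₂), A t⟫ = ⟪(t : H₁), (t : H₁)⟫ := by
      have := hAadj d t
      rw [← this]
    have hzero : ⟪(u₁ - u₂), (u₁ - u₂)⟫ + ⟪(t : H₁), (t : H₁)⟫ = 0 := by
      rw [← hAtd]
      rw [hdc] at hinner ⊢
      rw [inner_add_right] at hinner
      exact hinner
    have hre : ‖u₁ - u₂‖ ^ 2 + ‖(t : H₁)‖ ^ 2 = 0 := by
      have h1 : ⟪(u₁ - u₂), (u₁ - u₂)⟫ = (‖u₁ - u₂‖ : ℂ) ^ 2 := inner_self_eq_norm_sq_to_K _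
      have h2 : ⟪(t : H₁), (t : H₁)⟫ = (‖(t : H₁)‖ : ℂ) ^ 2 := inner_self_eq_norm_sq_to_K _
      have : ((‖u₁ - u₂‖ ^ 2 + ‖(t : H₁)‖ ^ 2 : ℝ) : ℂ) = 0 := by
        push_cast
        rw [← h1, ← h2]
        exact hzero
      exact_mod_cast this
    have hsq : ‖u₁ - u₂‖ ^ 2 = 0 :=
      ((add_eq_zero_iff_of_nonneg (sq_nonneg _) (sq_nonneg _)).1 hre).1
    exact sub_eq_zero.1 (norm_eq_zero.1 (sq_eq_zero_iff.1 hsq))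
  -- main argument
  ext y
  simp only [ContinuousLinearMap.add_apply, ContinuousLinearMap.one_apply]
  have m₂ := hRA1 y
  have n₂ := hRA2 y m₂
  have hy1 := hRA y m₂ n₂
  have k1 := hRB1 y
  have k2 := hRB2 y k1
  have hy2 := hRB y k1 k2
  set w : B.domain := ⟨RB y, k1⟩ with hw
  have hpA : (B w : H₁) ∈ A.domain := hBAmem w
  -- A (B w) = RB y
  have hAp : A ⟨B w, hpA⟩ = RB y := by
    have h7 := (hABproj w hpA).2
    have h0 := hker _ h7
    have : (w : H₂) = A ⟨B w, hpA⟩ := sub_eq_zero.1 h0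
    exact this.symm
  set p : B.adjoint.domain := ⟨B w, k2⟩ with hp
  set u' : H₂ := B.adjoint p with hu'
  -- key inner product identity
  have hkey : ∀ s : A.domain, ⟪(B w : H₁), (s : H₁)⟫ = ⟪u', A s⟫ := by
    intro s
    have hAs : A s ∈ B.domain := hABmem s
    have hform := hBadj p (⟨A s, hAs⟩ : B.domain)
    -- hform : ⟪B.adjoint p, B-elt⟫ = ⟪(p : H₁), B ⟨A s, hAs⟩⟫
    have h8 := hBAproj s hAs
    have hporth : ⟪(B w : H₁), (s : H₁) - B ⟨A s, hAs⟩⟫ = 0 := by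
      have hmem : (B w : H₁) ∈ (LinearMap.range B.toFun).topologicalClosure :=
        Submodule.le_topologicalClosure _ ⟨w, rfl⟩
      have := (Submodule.mem_orthogonal' _ _).1 h8.2 _ hmem
      rw [← inner_conj_symm, this, map_zero]
    have hps : ⟪(B w : H₁), (s : H₁)⟫ = ⟪(B w : H₁), (B ⟨A s, hAs⟩ : H₁)⟫ :=
      sub_eq_zero.1 (by rw [← inner_sub_right]; exact hporth)
    rw [hps, hu']
    exact (hform).symm
  have hmem' : u' ∈ A.adjoint.domain :=
    LinearPMap.mem_adjoint_domain_of_exists _ ⟨(B w : H₁), hkey⟩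
  have hval' : A.adjoint ⟨u', hmem'⟩ = (B w : H₁) :=
    LinearPMap.adjoint_apply_eq hAd _ hkey
  have n₁ : A.adjoint ⟨u', hmem'⟩ ∈ A.domain := by rw [hval']; exact hpA
  have hAval : A ⟨A.adjoint ⟨u', hmem'⟩, n₁⟩ = RB y := by
    have hsub : (⟨A.adjoint ⟨u', hmem'⟩, n₁⟩ : A.domain) = ⟨(B w : H₁), hpA⟩ :=
      Subtype.ext hval'
    rw [hsub, hAp]
  have heq : u' + A ⟨A.adjoint ⟨u', hmem'⟩, n₁⟩ = RA y + A ⟨A.adjoint ⟨RA y, m₂⟩, n₂⟩ := by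
    rw [hAval, hy1, add_comm]
    exact hy2
  have hfin := huniq u' (RA y) hmem' m₂ n₁ n₂ heq
  rw [← hfin, add_comm]
  exact hy2
end

section
/- Let A be a bounded operator from H₁ to H₂ and B its Moore–Penrose inverse. Then for all x ∈ range(B), ‖x‖² = ‖(I + BB*)^{-1/2} x‖² + ‖(I + A*A)^{-1/2} x‖². -/
open ContinuousLinearMap

variable {H₁ H₂ : Type*}
  [NormedAddCommGroup H₁] [InnerProductSpace ℂ H₁] [CompleteSpace H₁]
  [NormedAddCommGroup H₂] [InnerProductSpace ℂ H₂] [CompleteSpace H₂]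

/-- `B` is the Moore–Penrose inverse of the bounded operator `A`:
`ABA = A`, `BAB = B`, `AB` is the orthogonal projection onto `range A` and
`BA` is the orthogonal projection onto `range B`. -/
def IsMP (A : H₁ →L[ℂ] H₂) (B : H₂ →L[ℂ] H₁) : Prop :=
  A.comp (B.comp A) = A ∧ B.comp (A.comp B) = B ∧
  (∀ y : H₂, y - A (B y) ∈ (LinearMap.range (A : H₁ →ₗ[ℂ] H₂))ᗮ) ∧
  (∀ x : H₁, x - B (A x) ∈ (LinearMap.range (B : H₂ →ₗ[ℂ] H₁))ᗮ)

/-- For a bounded `A` with Moore–Penrose inverse `B`,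
`S₁ = (I + BB*)^{-1/2}` and `S₂ = (I + A*A)^{-1/2}`, every `x ∈ range B`
satisfies `‖x‖² = ‖(I + BB*)^{-1/2} x‖² + ‖(I + A*A)^{-1/2} x‖²`. -/
theorem mp_norm_identity_on_range (A : H₁ →L[ℂ] H₂) (B : H₂ →L[ℂ] H₁)
    (hB : IsMP A B)
    (S₁ : H₁ →L[ℂ] H₁) (hS₁pos : S₁.IsPositive)
    (hS₁a : (S₁.comp S₁).comp (1 + B.comp (adjoint B)) = 1)
    (hS₁b : (1 + B.comp (adjoint B)).comp (S₁.comp S₁) = 1)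
    (S₂ : H₁ →L[ℂ] H₁) (hS₂pos : S₂.IsPositive)
    (hS₂a : (S₂.comp S₂).comp (1 + (adjoint A).comp A) = 1)
    (hS₂b : (1 + (adjoint A).comp A).comp (S₂.comp S₂) = 1) :
    ∀ x ∈ Set.range B, ‖x‖ ^ 2 = ‖S₁ x‖ ^ 2 + ‖S₂ x‖ ^ 2 := by
  obtain ⟨hABA, hBAB, hAB, hBA⟩ := hB
  have hABA' : ∀ z, A (B (A z)) = A z := fun z => ContinuousLinearMap.ext_iff.mp hABA z
  have hBAB' : ∀ z, B (A (B z)) = B z := fun z => ContinuousLinearMap.ext_iff.mp hBAB z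
  -- A* ∘ (A B) = A*
  have h2 : ∀ z, adjoint A z = adjoint A (A (B z)) := by
    intro z
    have h0 : adjoint A (z - A (B z)) = 0 := by
      rw [← inner_self_eq_zero (𝕜 := ℂ), adjoint_inner_right]
      exact (Submodule.mem_orthogonal _ _).mp (hAB z) _ ⟨adjoint A (z - A (B z)), rfl⟩
    have h1 := map_sub (adjoint A) z (A (B z))
    rw [h0] at h1
    exact sub_eq_zero.mp h1.symm
  -- BA is self-adjoint (pointwise)
  have h4 : ∀ u v : H₁, (inner ℂ (B (A u)) v : ℂ) = inner ℂ u (B (A v)) := by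
    intro u v
    have e1 : (inner ℂ (B (A u)) (v - B (A v)) : ℂ) = 0 :=
      (Submodule.mem_orthogonal _ _).mp (hBA v) _ ⟨A u, rfl⟩
    have e2 : (inner ℂ (B (A v)) (u - B (A u)) : ℂ) = 0 :=
      (Submodule.mem_orthogonal _ _).mp (hBA u) _ ⟨A v, rfl⟩
    have e1' : (inner ℂ (B (A u)) v : ℂ) = inner ℂ (B (A u)) (B (A v)) := by
      have := inner_sub_right (𝕜 := ℂ) (B (A u)) v (B (A v))
      rw [e1] at this; exact (sub_eq_zero.mp this.symm)
    have e2' : (inner ℂ (B (A v)) u : ℂ) = inner ℂ (B (A v)) (B (A u)) := by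
      have := inner_sub_right (𝕜 := ℂ) (B (A v)) u (B (A u))
      rw [e2] at this; exact (sub_eq_zero.mp this.symm)
    have e2'' : (inner ℂ u (B (A v)) : ℂ) = inner ℂ (B (A u)) (B (A v)) := by
      have := congrArg (starRingEnd ℂ) e2'
      rwa [inner_conj_symm, inner_conj_symm] at this
    rw [e1', e2'']
  -- AB is self-adjoint (pointwise)
  have h5 : ∀ u v : H₂, (inner ℂ (A (B u)) v : ℂ) = inner ℂ u (A (B v)) := by
    intro u v
    have e1 : (inner ℂ (A (B u)) (v - A (B v)) : ℂ) = 0 :=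
      (Submodule.mem_orthogonal _ _).mp (hAB v) _ ⟨B u, rfl⟩
    have e2 : (inner ℂ (A (B v)) (u - A (B u)) : ℂ) = 0 :=
      (Submodule.mem_orthogonal _ _).mp (hAB u) _ ⟨B v, rfl⟩
    have e1' : (inner ℂ (A (B u)) v : ℂ) = inner ℂ (A (B u)) (A (B v)) := by
      have := inner_sub_right (𝕜 := ℂ) (A (B u)) v (A (B v))
      rw [e1] at this; exact (sub_eq_zero.mp this.symm)
    have e2' : (inner ℂ (A (B v)) u : ℂ) = inner ℂ (A (B v)) (A (B u)) := by
      have := inner_sub_right (𝕜 := ℂ) (A (B v)) u (A (B u))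
      rw [e2] at this; exact (sub_eq_zero.mp this.symm)
    have e2'' : (inner ℂ u (A (B v)) : ℂ) = inner ℂ (A (B u)) (A (B v)) := by
      have := congrArg (starRingEnd ℂ) e2'
      rwa [inner_conj_symm, inner_conj_symm] at this
    rw [e1', e2'']
  -- B* A* = A B
  have hadjAB : ∀ z : H₂, adjoint B (adjoint A z) = A (B z) := by
    intro z
    refine ext_inner_left ℂ fun v => ?_
    rw [adjoint_inner_right, adjoint_inner_right]
    exact h5 v z
  -- B A ∘ (A* A) = A* A  (range of A*A lies in range B)
  have keyQ : ∀ z : H₁, B (A (adjoint A (A z))) = adjoint A (A z) := by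
    intro z
    refine ext_inner_left ℂ fun w => ?_
    calc (inner ℂ w (B (A (adjoint A (A z)))) : ℂ)
        = inner ℂ (B (A w)) (adjoint A (A z)) := (h4 w (adjoint A (A z))).symm
      _ = inner ℂ (A (B (A w))) (A z) := by rw [adjoint_inner_right]
      _ = inner ℂ (A w) (A z) := by rw [hABA']
      _ = inner ℂ w (adjoint A (A z)) := by rw [adjoint_inner_right]
  -- B B* ∘ (A* A) = id on range B
  have PQ : ∀ v : H₂, B (adjoint B (adjoint A (A (B v)))) = B v := by
    intro v
    rw [← h2 v, hadjAB, hBAB']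
  rintro x ⟨y, rfl⟩
  set x := B y with hx
  set u := S₂ (S₂ x) with hu_def
  -- u + A* A u = x
  have hu : u + adjoint A (A u) = x := by
    have := ContinuousLinearMap.ext_iff.mp hS₂b x
    simpa [ContinuousLinearMap.add_apply, ContinuousLinearMap.comp_apply,
      ContinuousLinearMap.one_apply] using this
  -- u ∈ range B
  have hu_range : u = B (y - A (adjoint A (A u))) := by
    rw [map_sub, keyQ, show B y = x from rfl, ← hu]; abel
  have PQu : B (adjoint B (adjoint A (A u))) = u := by
    rw [hu_range]; exact PQ _
  -- (1 + B B*) (x - u) = x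
  have key : x - u + B (adjoint B (x - u)) = x := by
    have hBBx : B (adjoint B x) = B (adjoint B u) + u := by
      conv_lhs => rw [← hu]
      rw [map_add, map_add, PQu]
    rw [map_sub, map_sub, hBBx]
    abel
  -- S₁ S₁ x = x - u
  have hT1 : S₁ (S₁ x) = x - u := by
    have h := ContinuousLinearMap.ext_iff.mp hS₁a (x - u)
    simp only [ContinuousLinearMap.comp_apply, ContinuousLinearMap.add_apply,
      ContinuousLinearMap.one_apply] at h
    rw [key] at h
    exact h
  -- self-adjointness of S₁, S₂
  have e1 : (inner ℂ (S₁ x) (S₁ x) : ℂ) = inner ℂ x (S₁ (S₁ x)) := by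
    have := adjoint_inner_right S₁ x (S₁ x)
    rw [hS₁pos.isSelfAdjoint.adjoint_eq] at this
    exact this.symm
  have e2 : (inner ℂ (S₂ x) (S₂ x) : ℂ) = inner ℂ x (S₂ (S₂ x)) := by
    have := adjoint_inner_right S₂ x (S₂ x)
    rw [hS₂pos.isSelfAdjoint.adjoint_eq] at this
    exact this.symm
  have hsum : S₁ (S₁ x) + S₂ (S₂ x) = x := by rw [hT1, ← hu_def]; abel
  calc ‖x‖ ^ 2 = RCLike.re (inner ℂ x x : ℂ) := (inner_self_eq_norm_sq x).symm
    _ = RCLike.re (inner ℂ x (S₁ (S₁ x) + S₂ (S₂ x)) : ℂ) := by rw [hsum]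
    _ = RCLike.re ((inner ℂ x (S₁ (S₁ x)) : ℂ) + inner ℂ x (S₂ (S₂ x))) := by
        rw [inner_add_right]
    _ = RCLike.re (inner ℂ (S₁ x) (S₁ x) : ℂ) + RCLike.re (inner ℂ (S₂ x) (S₂ x) : ℂ) := by
        rw [map_add, e1, e2]
    _ = ‖S₁ x‖ ^ 2 + ‖S₂ x‖ ^ 2 := by rw [inner_self_eq_norm_sq, inner_self_eq_norm_sq]
end

section
/- Let A be a bounded operator from H₁ to H₂ and B its Moore–Penrose inverse. Then the operator B*(I + BB*)^{-1/2} : H₁ → H₂ is bounded with closed range, and its Moore–Penrose inverse is T_B = B(I + B*B)^{-1/2} + A*(I + B*B)^{-1/2}. -/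
open ContinuousLinearMap

private lemma commute_of_mem_elemental' {𝔸 : Type*} [CStarAlgebra 𝔸] {X a y : 𝔸}
    (h1 : X * a = a * X) (h2 : star X * a = a * star X)
    (hy : y ∈ StarAlgebra.elemental ℂ a) : X * y = y * X := by
  have hmem : a ∈ StarSubalgebra.centralizer ℂ {X} := by
    rw [StarSubalgebra.mem_centralizer_iff]
    rintro g (rfl : g = X)
    exact ⟨h1, h2⟩
  have hclosed : IsClosed ((StarSubalgebra.centralizer ℂ ({X} : Set 𝔸) : StarSubalgebra ℂ 𝔸) : Set 𝔸) := by
    rw [StarSubalgebra.coe_centralizer]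
    have heq : (({X} : Set 𝔸) ∪ star {X}).centralizer
        = ⋂ m ∈ (({X} : Set 𝔸) ∪ star {X}), {c | m * c = c * m} := by
      ext c; simp [Set.mem_centralizer_iff]
    rw [heq]
    exact isClosed_biInter fun m _ => isClosed_eq (continuous_const.mul continuous_id)
      (continuous_id.mul continuous_const)
  have hle := StarAlgebra.elemental.le_of_mem hclosed hmem hy
  rw [StarSubalgebra.mem_centralizer_iff] at hle
  exact (hle X rfl).1

private lemma commute_cfc_real' {𝔸 : Type*} [CStarAlgebra 𝔸] {X a : 𝔸} (ha : IsSelfAdjoint a)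
    (h1 : X * a = a * X) (f : ℝ → ℝ) : X * cfc f a = cfc f a * X := by
  have h2 : star X * a = a * star X := by
    have h := congrArg star h1
    rw [star_mul, star_mul, ha.star_eq] at h
    exact h.symm
  rw [cfc_real_eq_complex f ha]
  refine cfc_cases (fun y => X * y = y * X) a _ (by simp) fun hg hnorm => ?_
  rw [cfcHom_eq_of_isStarNormal]
  exact commute_of_mem_elemental' h1 h2 (by simp [StarAlgHom.comp_apply])

private lemma commute_sqrt' {H : Type*} [NormedAddCommGroup H] [InnerProductSpace ℂ H]
    [CompleteSpace H] {T X : H →L[ℂ] H} (hT : T.IsPositive)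
    (h : X * (T * T) = (T * T) * X) : X * T = T * X := by
  have hT0 : (0 : H →L[ℂ] H) ≤ T := (ContinuousLinearMap.nonneg_iff_isPositive T).mpr hT
  have hTsa : star T = T := hT.isSelfAdjoint.star_eq
  have hTT : (0 : H →L[ℂ] H) ≤ T * T := by
    simpa [hTsa] using star_mul_self_nonneg T
  have hTTsa : IsSelfAdjoint (T * T) := IsSelfAdjoint.of_nonneg hTT
  have hbnn : (0 : H →L[ℂ] H) ≤ cfc Real.sqrt (T * T) :=
    cfc_nonneg fun x _ => Real.sqrt_nonneg x
  have hbb : cfc Real.sqrt (T * T) * cfc Real.sqrt (T * T) = T * T := by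
    rw [← cfc_mul ..]
    conv_rhs => rw [← cfc_id ℝ (T * T)]
    refine cfc_congr fun x hx => ?_
    have hx0 : (0:ℝ) ≤ x := spectrum_nonneg_of_nonneg hTT hx
    simp [Real.mul_self_sqrt hx0]
  have hTb : T = cfc Real.sqrt (T * T) := by
    have e1 := CFC.sqrt_unique hbb hbnn
    have e2 := CFC.sqrt_unique (a := T * T) rfl hT0
    exact e2.symm.trans e1
  rw [hTb]
  exact commute_cfc_real' hTTsa h Real.sqrt

private lemma commute_of_inverse' {M : Type*} [Monoid M] {X Y Z : M}
    (hYZ : Y * Z = 1) (hZY : Z * Y = 1) (h : X * Y = Y * X) : X * Z = Z * X := by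
  calc X * Z = (Z * Y) * (X * Z) := by rw [hZY, one_mul]
  _ = Z * ((Y * X) * Z) := by rw [mul_assoc, mul_assoc]
  _ = Z * ((X * Y) * Z) := by rw [h]
  _ = Z * (X * (Y * Z)) := by rw [mul_assoc]
  _ = Z * X := by rw [hYZ, mul_one]

section Intertwine

variable {H₁ H₂ : Type*}
  [NormedAddCommGroup H₁] [InnerProductSpace ℂ H₁] [CompleteSpace H₁]
  [NormedAddCommGroup H₂] [InnerProductSpace ℂ H₂] [CompleteSpace H₂]

private lemma intertwine' (B : H₂ →L[ℂ] H₁) {S₁ : H₁ →L[ℂ] H₁} {S₂ : H₂ →L[ℂ] H₂}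
    (h₁ : S₁.IsPositive) (h₂ : S₂.IsPositive)
    (hc : (S₁.comp S₁).comp B = B.comp (S₂.comp S₂)) :
    S₁.comp B = B.comp S₂ := by
  set E := WithLp 2 (H₁ × H₂) with hE
  let e : E ≃L[ℂ] H₁ × H₂ := WithLp.prodContinuousLinearEquiv 2 ℂ H₁ H₂
  let S : E →L[ℂ] E := (e.symm : H₁ × H₂ →L[ℂ] E) ∘L ((S₁.prodMap S₂) ∘L (e : E →L[ℂ] H₁ × H₂))
  let W : E →L[ℂ] E := (e.symm : H₁ × H₂ →L[ℂ] E) ∘L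
    (((B.comp (ContinuousLinearMap.snd ℂ H₁ H₂)).prod 0) ∘L (e : E →L[ℂ] H₁ × H₂))
  have hS : S.IsPositive := by
    constructor
    · intro x y
      show (inner ℂ (S x) y : ℂ) = inner ℂ x (S y)
      rw [WithLp.prod_inner_apply, WithLp.prod_inner_apply]
      have e1 : (inner ℂ (S₁ (e x).1) ((e y).1) : ℂ) = inner ℂ ((e x).1) (S₁ (e y).1) :=
        (ContinuousLinearMap.isSelfAdjoint_iff_isSymmetric.mp h₁.isSelfAdjoint) _ _
      have e2 : (inner ℂ (S₂ (e x).2) ((e y).2) : ℂ) = inner ℂ ((e x).2) (S₂ (e y).2) :=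
        (ContinuousLinearMap.isSelfAdjoint_iff_isSymmetric.mp h₂.isSelfAdjoint) _ _
      exact congrArg₂ (· + ·) e1 e2
    · intro x
      have p1 : 0 ≤ RCLike.re (inner ℂ (S₁ ((e x).1)) ((e x).1) : ℂ) := h₁.2 ((e x).1)
      have p2 : 0 ≤ RCLike.re (inner ℂ (S₂ ((e x).2)) ((e x).2) : ℂ) := h₂.2 ((e x).2)
      show 0 ≤ RCLike.re (inner ℂ (S x) x : ℂ)
      rw [WithLp.prod_inner_apply, map_add]
      exact add_nonneg p1 p2
  have hWS2 : W * (S * S) = (S * S) * W := by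
    ext v
    show W (S (S v)) = S (S (W v))
    have hc' := DFunLike.congr_fun hc ((e v).2)
    simp only [ContinuousLinearMap.comp_apply] at hc'
    apply (WithLp.equiv 2 (H₁ × H₂)).symm.congr_arg
    refine Prod.ext ?_ ?_
    · show B (S₂ (S₂ _)) = S₁ (S₁ (B _))
      exact hc'.symm
    · show (0 : H₂) = S₂ (S₂ 0)
      simp
  have key := commute_sqrt' hS hWS2
  ext y
  have hv := DFunLike.congr_fun key ((WithLp.equiv 2 (H₁ × H₂)).symm ((0 : H₁), y))
  show S₁ (B y) = B (S₂ y)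
  have h1 : (W * S) ((WithLp.equiv 2 (H₁ × H₂)).symm ((0 : H₁), y))
      = (WithLp.equiv 2 (H₁ × H₂)).symm (B (S₂ y), 0) := rfl
  have h2 : (S * W) ((WithLp.equiv 2 (H₁ × H₂)).symm ((0 : H₁), y))
      = (WithLp.equiv 2 (H₁ × H₂)).symm (S₁ (B y), S₂ 0) := rfl
  have h3 := h1.symm.trans (hv.trans h2)
  have h4 := congrArg (fun z => (WithLp.equiv 2 (H₁ × H₂) z).1) h3
  simpa using h4.symm

end Intertwine

variable {H₁ H₂ : Type*}
  [NormedAddCommGroup H₁] [InnerProductSpace ℂ H₁] [CompleteSpace H₁]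
  [NormedAddCommGroup H₂] [InnerProductSpace ℂ H₂] [CompleteSpace H₂]

set_option maxHeartbeats 1600000 in
/-- For a bounded `A` with Moore–Penrose inverse `B`,
`S₁ = (I + BB*)^{-1/2}` and `S₂ = (I + B*B)^{-1/2}`, the bounded operator
`B*(I + BB*)^{-1/2}` has closed range and its Moore–Penrose inverse is
`T_B = B(I + B*B)^{-1/2} + A*(I + B*B)^{-1/2}`. -/
theorem mp_of_normalized_adjoint (A : H₁ →L[ℂ] H₂) (B : H₂ →L[ℂ] H₁)
    (hB : IsMP A B)
    (S₁ : H₁ →L[ℂ] H₁) (hS₁pos : S₁.IsPositive)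
    (hS₁a : (S₁.comp S₁).comp (1 + B.comp (adjoint B)) = 1)
    (hS₁b : (1 + B.comp (adjoint B)).comp (S₁.comp S₁) = 1)
    (S₂ : H₂ →L[ℂ] H₂) (hS₂pos : S₂.IsPositive)
    (hS₂a : (S₂.comp S₂).comp (1 + (adjoint B).comp B) = 1)
    (hS₂b : (1 + (adjoint B).comp B).comp (S₂.comp S₂) = 1) :
    IsClosed (Set.range ((adjoint B).comp S₁)) ∧
    IsMP ((adjoint B).comp S₁) (B.comp S₂ + (adjoint A).comp S₂) := by
  obtain ⟨h1, h2, h3, h4⟩ := hB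
  have h1f : ∀ x, A (B (A x)) = A x := fun x => DFunLike.congr_fun h1 x
  have h2f : ∀ x, B (A (B x)) = B x := fun x => DFunLike.congr_fun h2 x
  -- symmetry of P = A ∘ B
  have hPsym : ∀ u v : H₂, (inner ℂ (A (B u)) v : ℂ) = inner ℂ u (A (B v)) := by
    have hi : ∀ u v : H₂, (inner ℂ (A (B u)) v : ℂ) = inner ℂ (A (B u)) (A (B v)) := by
      intro u v
      have h0 := (Submodule.mem_orthogonal _ _).mp (h3 v) (A (B u)) ⟨B u, rfl⟩
      rw [inner_sub_right] at h0
      exact (sub_eq_zero.mp h0)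
    intro u v
    calc (inner ℂ (A (B u)) v : ℂ) = inner ℂ (A (B u)) (A (B v)) := hi u v
    _ = inner ℂ u (A (B v)) := by
        have hvu := hi v u
        calc (inner ℂ (A (B u)) (A (B v)) : ℂ)
            = starRingEnd ℂ (inner ℂ (A (B v)) (A (B u))) := (inner_conj_symm _ _).symm
        _ = starRingEnd ℂ (inner ℂ (A (B v)) u) := by rw [← hvu]
        _ = inner ℂ u (A (B v)) := inner_conj_symm _ _
  have hQsym : ∀ u v : H₁, (inner ℂ (B (A u)) v : ℂ) = inner ℂ u (B (A v)) := by
    have hi : ∀ u v : H₁, (inner ℂ (B (A u)) v : ℂ) = inner ℂ (B (A u)) (B (A v)) := by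
      intro u v
      have h0 := (Submodule.mem_orthogonal _ _).mp (h4 v) (B (A u)) ⟨A u, rfl⟩
      rw [inner_sub_right] at h0
      exact (sub_eq_zero.mp h0)
    intro u v
    calc (inner ℂ (B (A u)) v : ℂ) = inner ℂ (B (A u)) (B (A v)) := hi u v
    _ = inner ℂ u (B (A v)) := by
        have hvu := hi v u
        calc (inner ℂ (B (A u)) (B (A v)) : ℂ)
            = starRingEnd ℂ (inner ℂ (B (A v)) (B (A u))) := (inner_conj_symm _ _).symm
        _ = starRingEnd ℂ (inner ℂ (B (A v)) u) := by rw [← hvu]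
        _ = inner ℂ u (B (A v)) := inner_conj_symm _ _
  have hPsa : IsSelfAdjoint (A.comp B) := by
    rw [ContinuousLinearMap.isSelfAdjoint_iff_isSymmetric]
    intro u v; exact hPsym u v
  have hQsa : IsSelfAdjoint (B.comp A) := by
    rw [ContinuousLinearMap.isSelfAdjoint_iff_isSymmetric]
    intro u v; exact hQsym u v
  have hPadj : adjoint (A.comp B) = A.comp B := isSelfAdjoint_iff'.mp hPsa
  have hQadj : adjoint (B.comp A) = B.comp A := isSelfAdjoint_iff'.mp hQsa
  have e1 : (adjoint B).comp (adjoint A) = A.comp B := by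
    rw [← adjoint_comp]; exact hPadj
  have e2 : (adjoint A).comp (adjoint B) = B.comp A := by
    rw [← adjoint_comp]; exact hQadj
  have e1f : ∀ y, adjoint B (adjoint A y) = A (B y) := fun y => DFunLike.congr_fun e1 y
  have e2f : ∀ y, adjoint A (adjoint B y) = B (A y) := fun y => DFunLike.congr_fun e2 y
  have e3 : (A.comp B).comp (adjoint B) = adjoint B := by
    have h := congrArg ContinuousLinearMap.adjoint h2
    rw [adjoint_comp, adjoint_comp, e1] at h
    exact h
  have e3f : ∀ x, A (B (adjoint B x)) = adjoint B x := fun x => DFunLike.congr_fun e3 x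
  have e6 : (B.comp A).comp (adjoint A) = adjoint A := by
    have h := congrArg ContinuousLinearMap.adjoint h1
    rw [adjoint_comp, adjoint_comp, e2] at h
    exact h
  have e6f : ∀ x, B (A (adjoint A x)) = adjoint A x := fun x => DFunLike.congr_fun e6 x
  -- K = B* B on H₂
  have hKsa : IsSelfAdjoint ((adjoint B).comp B) := by
    rw [isSelfAdjoint_iff', adjoint_comp, adjoint_adjoint]
  have e8 : ((adjoint B).comp B) * (A.comp B) = (adjoint B).comp B := by
    ext x
    show adjoint B (B (A (B x))) = adjoint B (B x)
    rw [h2f x]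
  have e9 : (A.comp B) * ((adjoint B).comp B) = (adjoint B).comp B := by
    have h := congrArg star e8
    rw [star_mul, hPsa.star_eq, hKsa.star_eq] at h
    exact h
  have c1 : (A.comp B) * (1 + (adjoint B).comp B) = (1 + (adjoint B).comp B) * (A.comp B) := by
    rw [mul_add, add_mul, mul_one, one_mul, e8, e9]
  have hS₂a' : (S₂ * S₂) * (1 + (adjoint B).comp B) = 1 := hS₂a
  have hS₂b' : (1 + (adjoint B).comp B) * (S₂ * S₂) = 1 := hS₂b
  have hS₁a' : (S₁ * S₁) * (1 + B.comp (adjoint B)) = 1 := hS₁a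
  have hS₁b' : (1 + B.comp (adjoint B)) * (S₁ * S₁) = 1 := hS₁b
  have c2 : (A.comp B) * (S₂ * S₂) = (S₂ * S₂) * (A.comp B) :=
    commute_of_inverse' hS₂b' hS₂a' c1
  have c3 : (A.comp B) * S₂ = S₂ * (A.comp B) := commute_sqrt' hS₂pos c2
  have c4 : S₂ * (1 + (adjoint B).comp B) = (1 + (adjoint B).comp B) * S₂ :=
    commute_of_inverse' hS₂a' hS₂b' (mul_assoc S₂ S₂ S₂).symm
  -- intertwining
  have hc : (S₁.comp S₁).comp B = B.comp (S₂.comp S₂) := by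
    ext x
    have a2 : S₂ (S₂ x) + adjoint B (B (S₂ (S₂ x))) = x := by
      have h := DFunLike.congr_fun hS₂b x
      simpa using h
    have a1 : S₁ (S₁ (B (S₂ (S₂ x)) + B (adjoint B (B (S₂ (S₂ x)))))) = B (S₂ (S₂ x)) := by
      have h := DFunLike.congr_fun hS₁a (B (S₂ (S₂ x)))
      simpa using h
    show S₁ (S₁ (B x)) = B (S₂ (S₂ x))
    calc S₁ (S₁ (B x))
        = S₁ (S₁ (B (S₂ (S₂ x) + adjoint B (B (S₂ (S₂ x)))))) := by rw [a2]
    _ = S₁ (S₁ (B (S₂ (S₂ x)) + B (adjoint B (B (S₂ (S₂ x)))))) := by rw [map_add]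
    _ = B (S₂ (S₂ x)) := a1
  have i1 : S₁.comp B = B.comp S₂ := intertwine' B hS₁pos hS₂pos hc
  have i2 : (adjoint B).comp S₁ = S₂.comp (adjoint B) := by
    have h := congrArg ContinuousLinearMap.adjoint i1
    rw [adjoint_comp, adjoint_comp, isSelfAdjoint_iff'.mp hS₁pos.isSelfAdjoint,
      isSelfAdjoint_iff'.mp hS₂pos.isSelfAdjoint] at h
    exact h
  have i2f : ∀ z, adjoint B (S₁ z) = S₂ (adjoint B z) := fun z => DFunLike.congr_fun i2 z
  -- L M = A ∘ B
  have LM : ((adjoint B).comp S₁).comp (B.comp S₂ + (adjoint A).comp S₂) = A.comp B := by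
    have expand : ((adjoint B).comp S₁).comp (B.comp S₂ + (adjoint A).comp S₂)
        = S₂ * (((adjoint B).comp B) + (A.comp B)) * S₂ := by
      ext y
      show adjoint B (S₁ (B (S₂ y) + adjoint A (S₂ y)))
          = S₂ (adjoint B (B (S₂ y)) + A (B (S₂ y)))
      rw [map_add S₁, map_add (adjoint B), i2f, i2f, map_add S₂]
      congr 1
      rw [← e1f]
    rw [expand]
    have hKP : ((adjoint B).comp B) + (A.comp B) = (A.comp B) * (1 + (adjoint B).comp B) := by
      rw [mul_add, mul_one, e9, add_comm]
    rw [hKP]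
    calc S₂ * ((A.comp B) * (1 + (adjoint B).comp B)) * S₂
        = ((S₂ * (A.comp B)) * (1 + (adjoint B).comp B)) * S₂ := by
          rw [mul_assoc S₂ (A.comp B) (1 + (adjoint B).comp B)]
    _ = (((A.comp B) * S₂) * (1 + (adjoint B).comp B)) * S₂ := by rw [← c3]
    _ = (A.comp B) * ((S₂ * (1 + (adjoint B).comp B)) * S₂) := by
          rw [mul_assoc ((A.comp B)) S₂ (1 + (adjoint B).comp B), mul_assoc]
    _ = (A.comp B) * (((1 + (adjoint B).comp B) * S₂) * S₂) := by rw [c4]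
    _ = (A.comp B) * 1 := by rw [mul_assoc (1 + (adjoint B).comp B) S₂ S₂, hS₂b']
    _ = A.comp B := mul_one _
  have LMf : ∀ y, adjoint B (S₁ (B (S₂ y) + adjoint A (S₂ y))) = A (B y) :=
    fun y => DFunLike.congr_fun LM y
  -- M L = B ∘ A
  have ML : (B.comp S₂ + (adjoint A).comp S₂).comp ((adjoint B).comp S₁) = B.comp A := by
    have expand : (B.comp S₂ + (adjoint A).comp S₂).comp ((adjoint B).comp S₁)
        = ((B.comp (adjoint B)) + (B.comp A)) * (S₁ * S₁) := by
      ext x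
      show B (S₂ (adjoint B (S₁ x))) + adjoint A (S₂ (adjoint B (S₁ x)))
          = B (adjoint B (S₁ (S₁ x))) + B (A (S₁ (S₁ x)))
      rw [← e2f (S₁ (S₁ x)), i2f (S₁ x), i2f x]
    rw [expand]
    have hGQ : (B.comp (adjoint B)) + (B.comp A) = (B.comp A) * (1 + B.comp (adjoint B)) := by
      rw [mul_add, mul_one]
      have e10 : (B.comp A) * (B.comp (adjoint B)) = B.comp (adjoint B) := by
        ext x
        show B (A (B (adjoint B x))) = B (adjoint B x)
        rw [h2f]
      rw [e10, add_comm]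
    rw [hGQ, mul_assoc, hS₁b', mul_one]
  have MLf : ∀ x, B (S₂ (adjoint B (S₁ x))) + adjoint A (S₂ (adjoint B (S₁ x))) = B (A x) :=
    fun x => DFunLike.congr_fun ML x
  -- now the four conditions and closedness
  have pl : ∀ x, A (B (adjoint B (S₁ x))) = adjoint B (S₁ x) := fun x => e3f (S₁ x)
  refine ⟨?_, ?_, ?_, ?_, ?_⟩
  · -- closed range
    have hrange : Set.range ⇑((adjoint B).comp S₁) = {y | A (B y) = y} := by
      ext y
      constructor
      · rintro ⟨x, rfl⟩
        exact pl x
      · intro hy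
        refine ⟨S₁ ((1 + B.comp (adjoint B)) (adjoint A y)), ?_⟩
        show adjoint B (S₁ (S₁ ((1 + B.comp (adjoint B)) (adjoint A y)))) = y
        have h' : S₁ (S₁ ((1 + B.comp (adjoint B)) (adjoint A y))) = adjoint A y :=
          DFunLike.congr_fun hS₁a (adjoint A y)
        rw [h', e1f]
        exact hy
    rw [hrange]
    exact isClosed_eq ((A.comp B).continuous) continuous_id
  · -- L M L = L
    have : (((adjoint B).comp S₁).comp ((B.comp S₂ + (adjoint A).comp S₂).comp
        ((adjoint B).comp S₁))) = (A.comp B).comp ((adjoint B).comp S₁) := by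
      ext x
      show adjoint B (S₁ ((B.comp S₂ + (adjoint A).comp S₂) (adjoint B (S₁ x))))
          = A (B (adjoint B (S₁ x)))
      exact LMf (adjoint B (S₁ x))
    rw [this]
    ext x
    exact pl x
  · -- M L M = M
    ext y
    have step := MLf ((B.comp S₂ + (adjoint A).comp S₂) y)
    have expand : B (A ((B.comp S₂ + (adjoint A).comp S₂) y))
        = B (S₂ y) + adjoint A (S₂ y) := by
      show B (A (B (S₂ y) + adjoint A (S₂ y))) = _
      rw [map_add, map_add, h2f (S₂ y), e6f (S₂ y)]
    exact step.trans expand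
  · -- orthogonality 1
    intro y
    rw [Submodule.mem_orthogonal]
    intro u hu
    obtain ⟨x, rfl⟩ := LinearMap.mem_range.mp hu
    show (inner ℂ (adjoint B (S₁ x))
        (y - adjoint B (S₁ (B (S₂ y) + adjoint A (S₂ y)))) : ℂ) = 0
    rw [LMf y]
    calc (inner ℂ (adjoint B (S₁ x)) (y - A (B y)) : ℂ)
        = inner ℂ (A (B (adjoint B (S₁ x)))) (y - A (B y)) := by rw [pl x]
    _ = inner ℂ (adjoint B (S₁ x)) (A (B (y - A (B y)))) := hPsym _ _
    _ = 0 := by simp [map_sub, h2f y]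
  · -- orthogonality 2
    intro x
    rw [Submodule.mem_orthogonal]
    intro u hu
    obtain ⟨z, rfl⟩ := LinearMap.mem_range.mp hu
    show (inner ℂ (B (S₂ z) + adjoint A (S₂ z))
        (x - (B (S₂ (adjoint B (S₁ x))) + adjoint A (S₂ (adjoint B (S₁ x))))) : ℂ) = 0
    rw [MLf x]
    have qM : B (A (B (S₂ z) + adjoint A (S₂ z))) = B (S₂ z) + adjoint A (S₂ z) := by
      rw [map_add, map_add, h2f (S₂ z), e6f (S₂ z)]
    calc (inner ℂ (B (S₂ z) + adjoint A (S₂ z)) (x - B (A x)) : ℂ)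
        = inner ℂ (B (A (B (S₂ z) + adjoint A (S₂ z)))) (x - B (A x)) := by rw [qM]
    _ = inner ℂ (B (S₂ z) + adjoint A (S₂ z)) (B (A (x - B (A x)))) := hQsym _ _
    _ = 0 := by simp [map_sub, h1f x]
end

section
/- Let A be a bounded operator from H₁ to H₂ and B its Moore–Penrose inverse. Then B*(I + BB*)^{-1/2} restricts to an isomorphism from null(B*)^⊥ onto range(B*). -/
open ContinuousLinearMap

variable {H₁ H₂ : Type*}
  [NormedAddCommGroup H₁] [InnerProductSpace ℂ H₁] [CompleteSpace H₁]
  [NormedAddCommGroup H₂] [InnerProductSpace ℂ H₂] [CompleteSpace H₂]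

/-- For a bounded `A` with Moore–Penrose inverse `B` and
`S₁ = (I + BB*)^{-1/2}`, the operator `B*(I + BB*)^{-1/2}` restricts to an
isomorphism (a continuous linear equivalence) from `(null B*)ᗮ` onto
`range B*`. -/
theorem mp_restricts_to_iso (A : H₁ →L[ℂ] H₂) (B : H₂ →L[ℂ] H₁)
    (hB : IsMP A B)
    (S₁ : H₁ →L[ℂ] H₁) (hS₁pos : S₁.IsPositive)
    (hS₁a : (S₁.comp S₁).comp (1 + B.comp (adjoint B)) = 1)
    (hS₁b : (1 + B.comp (adjoint B)).comp (S₁.comp S₁) = 1) :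
    ∃ e : ((LinearMap.ker (↑(adjoint B) : H₁ →ₗ[ℂ] H₂))ᗮ : Submodule ℂ H₁) ≃L[ℂ]
        (LinearMap.range (↑(adjoint B) : H₁ →ₗ[ℂ] H₂) : Submodule ℂ H₂),
      ∀ x : ((LinearMap.ker (↑(adjoint B) : H₁ →ₗ[ℂ] H₂))ᗮ : Submodule ℂ H₁),
        (e x : H₂) = adjoint B (S₁ x) := by
  classical
  obtain ⟨hABA, hBAB, h3, h4⟩ := hB
  set B' := adjoint B with hB'def
  -- `Q = A ∘ B` is self-adjoint
  have hQsa : A.comp B = adjoint (A.comp B) := by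
    rw [ContinuousLinearMap.eq_adjoint_iff]
    intro x y
    have h1 : (inner ℂ ((A.comp B) x) (y - (A.comp B) y) : ℂ) = 0 :=
      (Submodule.mem_orthogonal _ _).1 (h3 y) ((A.comp B) x) ⟨B x, rfl⟩
    have h2 : (inner ℂ ((A.comp B) y) (x - (A.comp B) x) : ℂ) = 0 :=
      (Submodule.mem_orthogonal _ _).1 (h3 x) ((A.comp B) y) ⟨B y, rfl⟩
    have h2' : (inner ℂ (x - (A.comp B) x) ((A.comp B) y) : ℂ) = 0 :=
      inner_eq_zero_symm.mp h2
    have e1 : (inner ℂ ((A.comp B) x) y : ℂ) = inner ℂ ((A.comp B) x) ((A.comp B) y) := by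
      have := inner_sub_right (𝕜 := ℂ) ((A.comp B) x) y ((A.comp B) y)
      rw [h1] at this
      linear_combination -this
    have e2 : (inner ℂ x ((A.comp B) y) : ℂ) = inner ℂ ((A.comp B) x) ((A.comp B) y) := by
      have := inner_sub_left (𝕜 := ℂ) x ((A.comp B) x) ((A.comp B) y)
      rw [h2'] at this
      linear_combination -this
    rw [e1, e2]
  -- `B' = Q ∘ B'`
  have hB'Q : B' = (A.comp B).comp B' := by
    conv_lhs => rw [hB'def, ← hBAB]
    rw [ContinuousLinearMap.adjoint_comp, ← hQsa, ← hB'def]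
  -- characterization of `range B'`
  have hQy : ∀ y : H₂, y ∈ LinearMap.range (B' : H₁ →ₗ[ℂ] H₂) ↔ (A.comp B) y = y := by
    intro y
    constructor
    · rintro ⟨x, rfl⟩
      conv_rhs => rw [hB'Q]
      rfl
    · intro hy
      refine ⟨adjoint A y, ?_⟩
      have : (B'.comp (adjoint A)) y = (adjoint (A.comp B)) y := by
        rw [ContinuousLinearMap.adjoint_comp, hB'def]
      calc B' (adjoint A y) = (adjoint (A.comp B)) y := this
        _ = (A.comp B) y := by rw [← hQsa]
        _ = y := hy
  have hRclosed : IsClosed ((LinearMap.range (B' : H₁ →ₗ[ℂ] H₂) : Submodule ℂ H₂) : Set H₂) := by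
    have : (LinearMap.range (B' : H₁ →ₗ[ℂ] H₂) : Submodule ℂ H₂) = LinearMap.ker (((A.comp B) - 1 : H₂ →L[ℂ] H₂) : H₂ →ₗ[ℂ] H₂) := by
      ext y
      rw [hQy, LinearMap.mem_ker]
      constructor
      · intro h
        have h' : A (B y) = y := h
        simp [h']
      · intro h
        have h' : A (B y) - y = 0 := by simpa using h
        exact sub_eq_zero.mp h'
    rw [this]
    exact ContinuousLinearMap.isClosed_ker _
  -- facts about S₁
  set T := B.comp B' with hTdef
  have ha : ∀ x, S₁ (S₁ (x + T x)) = x := by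
    intro x
    have := ContinuousLinearMap.ext_iff.1 hS₁a x
    simpa using this
  have hb : ∀ x, S₁ (S₁ x) + T (S₁ (S₁ x)) = x := by
    intro x
    have := ContinuousLinearMap.ext_iff.1 hS₁b x
    simpa using this
  have hfinj : Function.Injective S₁ := by
    intro x y hxy
    calc x = S₁ (S₁ x) + T (S₁ (S₁ x)) := (hb x).symm
      _ = S₁ (S₁ y) + T (S₁ (S₁ y)) := by rw [hxy]
      _ = y := hb y
  have hfsurj : Function.Surjective S₁ := fun y => ⟨S₁ (y + T y), ha y⟩
  have hPsurj : ∀ y, ∃ x, x + T x = y := fun y => ⟨S₁ (S₁ y), hb y⟩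
  have hfPf : ∀ x, S₁ (S₁ x + T (S₁ x)) = x := fun x => hfinj (ha (S₁ x))
  have hcomm : ∀ s, T (S₁ s) = S₁ (T s) := by
    intro s
    obtain ⟨u, hu⟩ := hfsurj s
    obtain ⟨v, hv⟩ := hPsurj u
    have h1 : S₁ (s + T s) = v + T v := by
      rw [← hu, ← hv]; exact hfPf (v + T v)
    have h2 : S₁ s + T (S₁ s) = v + T v := by
      rw [← hu, ← hv]; exact hb (v + T v)
    have h3 : S₁ s + S₁ (T s) = S₁ s + T (S₁ s) := by
      calc S₁ s + S₁ (T s) = S₁ (s + T s) := (map_add S₁ s (T s)).symm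
        _ = v + T v := h1
        _ = S₁ s + T (S₁ s) := h2.symm
    exact (add_left_cancel h3).symm
  have hS₁sa : adjoint S₁ = S₁ := hS₁pos.isSelfAdjoint.adjoint_eq
  -- kernel facts
  have hkerTsub : ∀ x, T x = 0 → B' x = 0 := by
    intro x hx
    have h0 : (inner ℂ (B' x) (B' x) : ℂ) = 0 := by
      have h := ContinuousLinearMap.adjoint_inner_right B (B' x) x
      have hz : B (B' x) = 0 := hx
      rw [hz] at h
      simpa [hB'def] using h
    exact inner_self_eq_zero.mp h0
  have hSker : ∀ z, B' z = 0 → B' (S₁ z) = 0 := by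
    intro z hz
    have hTz : T z = 0 := by
      show B (B' z) = 0
      rw [hz, map_zero]
    exact hkerTsub _ (by rw [hcomm, hTz, map_zero])
  set K := ((LinearMap.ker (B' : H₁ →ₗ[ℂ] H₂))ᗮ : Submodule ℂ H₁) with hKdef
  have hSK : ∀ x ∈ K, S₁ x ∈ K := by
    intro x hx
    rw [hKdef, Submodule.mem_orthogonal]
    intro u hu
    have h1 : (inner ℂ u (S₁ x) : ℂ) = inner ℂ (S₁ u) x := by
      rw [← ContinuousLinearMap.adjoint_inner_left, hS₁sa]
    rw [h1]
    exact (Submodule.mem_orthogonal _ _).1 hx (S₁ u)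
      (LinearMap.mem_ker.2 (hSker u (LinearMap.mem_ker.1 hu)))
  haveI : CompleteSpace (LinearMap.ker (B' : H₁ →ₗ[ℂ] H₂)) :=
    (ContinuousLinearMap.isClosed_ker B').completeSpace_coe
  have hdecomp : ∀ z : H₁, ∃ z₁ ∈ K, ∃ z₂ ∈ LinearMap.ker (B' : H₁ →ₗ[ℂ] H₂), z = z₁ + z₂ := by
    intro z
    obtain ⟨y, hy, w, hw, hzw⟩ := (LinearMap.ker (B' : H₁ →ₗ[ℂ] H₂)).exists_add_mem_mem_orthogonal z
    exact ⟨w, hw, y, hy, by rw [hzw, add_comm]⟩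
  -- the linear map
  let f : K →ₗ[ℂ] (LinearMap.range (B' : H₁ →ₗ[ℂ] H₂) : Submodule ℂ H₂) :=
    { toFun := fun x => ⟨B' (S₁ (x : H₁)), ⟨S₁ (x : H₁), rfl⟩⟩
      map_add' := fun x y => by
        apply Subtype.ext
        simp
      map_smul' := fun c x => by
        apply Subtype.ext
        simp }
  have hinj : Function.Injective f := by
    intro x y hxy
    apply Subtype.ext
    have h1 : B' (S₁ (x : H₁)) = B' (S₁ (y : H₁)) := congrArg Subtype.val hxy
    have h2 : B' (S₁ ((x : H₁) - (y : H₁))) = 0 := by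
      rw [map_sub, map_sub, h1, sub_self]
    have h3 : S₁ ((x : H₁) - (y : H₁)) ∈ K := hSK _ (Submodule.sub_mem _ x.2 y.2)
    have h4 : S₁ ((x : H₁) - (y : H₁)) = 0 := by
      have := (Submodule.mem_orthogonal _ _).1 h3 _ (LinearMap.mem_ker.2 h2)
      exact inner_self_eq_zero.mp this
    have h5 : (x : H₁) - (y : H₁) = 0 := hfinj (by rw [h4, map_zero])
    exact sub_eq_zero.mp h5
  have hsurj : Function.Surjective f := by
    rintro ⟨y, z, rfl⟩
    obtain ⟨z₁, hz₁, z₂, hz₂, rfl⟩ := hdecomp z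
    obtain ⟨w, hw⟩ := hfsurj z₁
    obtain ⟨w₁, hw₁, w₂, hw₂, rfl⟩ := hdecomp w
    refine ⟨⟨w₁, hw₁⟩, ?_⟩
    apply Subtype.ext
    have hS₁w₂ : B' (S₁ w₂) = 0 := hSker _ (LinearMap.mem_ker.1 hw₂)
    have hkey : B' (S₁ w₁) = B' z₁ := by
      calc B' (S₁ w₁) = B' (S₁ w₁) + B' (S₁ w₂) := by rw [hS₁w₂, add_zero]
        _ = B' (S₁ (w₁ + w₂)) := by rw [map_add S₁, map_add B']
        _ = B' z₁ := by rw [hw]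
    show B' (S₁ w₁) = B' (z₁ + z₂)
    rw [map_add, show B' z₂ = 0 from LinearMap.mem_ker.1 hz₂, add_zero, hkey]
  let e₀ := LinearEquiv.ofBijective f ⟨hinj, hsurj⟩
  haveI : CompleteSpace K := (Submodule.isClosed_orthogonal _).completeSpace_coe
  haveI : CompleteSpace (LinearMap.range (B' : H₁ →ₗ[ℂ] H₂) : Submodule ℂ H₂) := hRclosed.completeSpace_coe
  have hcont : Continuous e₀ := by
    apply Continuous.subtype_mk
    exact (B'.comp S₁).continuous.comp continuous_subtype_val
  exact ⟨e₀.toContinuousLinearEquivOfContinuous hcont, fun x => rfl⟩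
end

section
/- Let A be a bounded operator from H₁ to H₂ and B its Moore–Penrose inverse. Then A admits the decomposition A = (I + B*B)^{-1/2} T_{B*}, where T_{B*} = B*(I + BB*)^{-1/2} + A(I + BB*)^{-1/2}. -/
set_option maxHeartbeats 1000000

open ContinuousLinearMap RCLike
open scoped InnerProductSpace ComplexConjugate

variable {H₁ H₂ : Type*}
  [NormedAddCommGroup H₁] [InnerProductSpace ℂ H₁] [CompleteSpace H₁]
  [NormedAddCommGroup H₂] [InnerProductSpace ℂ H₂] [CompleteSpace H₂]

/-- If `S₁`, `S₂` are positive, `S₁` is invertible (with explicit inverse `R`) and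
`S₂² T = T S₁²`, then `S₂ T = T S₁`. -/
lemma intertwine_of_sq (S₁ : H₁ →L[ℂ] H₁) (S₂ : H₂ →L[ℂ] H₂)
    (hS₁pos : S₁.IsPositive) (hS₂pos : S₂.IsPositive)
    (R : H₁ →L[ℂ] H₁) (hR : S₁.comp R = 1) (hR' : R.comp S₁ = 1)
    (T : H₁ →L[ℂ] H₂)
    (hTT : (S₂.comp S₂).comp T = T.comp (S₁.comp S₁)) :
    S₂.comp T = T.comp S₁ := by
  -- self-adjointness of S₁ as an inner product identity
  have hsa₁ : ∀ x y : H₁, ⟪S₁ x, y⟫_ℂ = ⟪x, S₁ y⟫_ℂ := by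
    intro x y
    have h := hS₁pos.isSelfAdjoint
    rw [isSelfAdjoint_iff'] at h
    conv_lhs => rw [← h]
    exact adjoint_inner_left _ _ _
  set D : H₁ →L[ℂ] H₂ := S₂.comp T - T.comp S₁ with hDdef
  suffices hD0 : D = 0 by
    have := sub_eq_zero.mp hD0
    exact this
  have hD : S₂.comp D + D.comp S₁ = 0 := by
    have : S₂.comp D + D.comp S₁ = (S₂.comp S₂).comp T - T.comp (S₁.comp S₁) := by
      simp only [hDdef, comp_sub, sub_comp, comp_assoc]
      abel
    rw [this, hTT, sub_self]
  by_cases hS1z : S₁ = 0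
  · have h10 : (1 : H₁ →L[ℂ] H₁) = 0 := by rw [← hR, hS1z, zero_comp]
    have hT0 : D = 0 := by
      calc D = D.comp (1 : H₁ →L[ℂ] H₁) := by rw [one_def, comp_id]
        _ = 0 := by rw [h10, comp_zero]
    exact hT0
  by_cases hRz : R = 0
  · have h10 : (1 : H₁ →L[ℂ] H₁) = 0 := by rw [← hR, hRz, comp_zero]
    calc D = D.comp (1 : H₁ →L[ℂ] H₁) := by rw [one_def, comp_id]
      _ = 0 := by rw [h10, comp_zero]
  have hnS : (0:ℝ) < ‖S₁‖ := norm_pos_iff.mpr hS1z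
  have hnR : (0:ℝ) < ‖R‖ := norm_pos_iff.mpr hRz
  set nS := ‖S₁‖ with hnSdef
  set nR := ‖R‖ with hnRdef
  set K : ℝ := nS * nR ^ 2 with hKdef
  have hK : 0 < K := by positivity
  -- Cauchy-Schwarz for the positive form ⟪S₁ ·, ·⟫
  have hCS : ∀ u v : H₁, ‖⟪S₁ u, v⟫_ℂ‖ * ‖⟪S₁ v, u⟫_ℂ‖ ≤ re ⟪S₁ u, u⟫_ℂ * re ⟪S₁ v, v⟫_ℂ :=
    fun u v => @InnerProductSpace.Core.inner_mul_inner_self_le ℂ H₁ _ _ _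
      { inner := fun x y => ⟪S₁ x, y⟫_ℂ
        conj_inner_symm := fun x y => by
          show conj ⟪S₁ y, x⟫_ℂ = ⟪S₁ x, y⟫_ℂ
          rw [inner_conj_symm, ← hsa₁]
        re_inner_nonneg := fun x => hS₁pos.re_inner_nonneg_left x
        add_left := fun x y z => by simp [inner_add_left, map_add]
        smul_left := fun x y r => by simp [map_smul, inner_smul_left]; ring } u v
  -- lower bound for the positive form
  have hm : ∀ x : H₁, K⁻¹ * ‖x‖^2 ≤ re ⟪S₁ x, x⟫_ℂ := by
    intro x
    have hr0 : 0 ≤ re ⟪S₁ x, x⟫_ℂ := hS₁pos.re_inner_nonneg_left x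
    by_cases hx : ‖x‖ = 0
    · rw [hx]; simpa using hr0
    have hxpos : (0:ℝ) < ‖x‖ := lt_of_le_of_ne (norm_nonneg x) (Ne.symm hx)
    have hfix : S₁ (R x) = x := by
      have := congrArg (fun f => f x) hR
      simpa using this
    have ha : ‖x‖^2 ≤ ‖⟪S₁ (R x), x⟫_ℂ‖ := by
      rw [hfix]
      calc ‖x‖^2 = re ⟪x, x⟫_ℂ := (inner_self_eq_norm_sq x).symm
        _ ≤ ‖⟪x, x⟫_ℂ‖ := re_le_norm _
    have hb : ‖⟪S₁ (R x), x⟫_ℂ‖ * ‖⟪S₁ x, R x⟫_ℂ‖ ≤ re ⟪S₁ (R x), R x⟫_ℂ * re ⟪S₁ x, x⟫_ℂ :=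
      hCS (R x) x
    have hc : ‖⟪S₁ x, R x⟫_ℂ‖ = ‖⟪S₁ (R x), x⟫_ℂ‖ := by
      rw [hsa₁, ← inner_conj_symm, norm_conj]
    have hd : re ⟪S₁ (R x), R x⟫_ℂ ≤ K * ‖x‖^2 := by
      calc re ⟪S₁ (R x), R x⟫_ℂ ≤ ‖S₁ (R x)‖ * ‖R x‖ := re_inner_le_norm (𝕜 := ℂ) _ _
        _ ≤ (nS * ‖R x‖) * ‖R x‖ := by
            have := S₁.le_opNorm (R x)
            exact mul_le_mul_of_nonneg_right this (norm_nonneg _)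
        _ ≤ (nS * (nR * ‖x‖)) * (nR * ‖x‖) := by
            have := R.le_opNorm x
            have h1 : nS * ‖R x‖ ≤ nS * (nR * ‖x‖) :=
              mul_le_mul_of_nonneg_left this (le_of_lt hnS)
            exact mul_le_mul h1 this (norm_nonneg _) (by positivity)
        _ = K * ‖x‖^2 := by rw [hKdef]; ring
    -- combine
    have hcomb : ‖x‖^2 * ‖x‖^2 ≤ (K * ‖x‖^2) * re ⟪S₁ x, x⟫_ℂ := by
      calc ‖x‖^2 * ‖x‖^2 ≤ ‖⟪S₁ (R x), x⟫_ℂ‖ * ‖⟪S₁ x, R x⟫_ℂ‖ := by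
            rw [hc]
            exact mul_le_mul ha ha (by positivity) (norm_nonneg _)
        _ ≤ re ⟪S₁ (R x), R x⟫_ℂ * re ⟪S₁ x, x⟫_ℂ := hb
        _ ≤ (K * ‖x‖^2) * re ⟪S₁ x, x⟫_ℂ := mul_le_mul_of_nonneg_right hd hr0
    have hx2 : (0:ℝ) < ‖x‖^2 := by positivity
    have h1 : ‖x‖^2 ≤ K * re ⟪S₁ x, x⟫_ℂ := by
      have := le_of_mul_le_mul_right (by linarith [hcomb] : ‖x‖^2 * ‖x‖^2 ≤ (K * re ⟪S₁ x, x⟫_ℂ) * ‖x‖^2) hx2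
      exact this
    calc K⁻¹ * ‖x‖^2 ≤ K⁻¹ * (K * re ⟪S₁ x, x⟫_ℂ) := by
          exact mul_le_mul_of_nonneg_left h1 (by positivity)
      _ = re ⟪S₁ x, x⟫_ℂ := by field_simp
  set m : ℝ := K⁻¹ with hmdef
  have hm0 : 0 < m := by positivity
  -- m ≤ nS
  have hmnS : m ≤ nS := by
    obtain ⟨x, hx⟩ : ∃ x : H₁, S₁ x ≠ 0 := by
      by_contra h
      push_neg at h
      exact hS1z (by ext x; simpa using h x)
    have hxne : x ≠ 0 := by rintro rfl; simp at hx
    have hxpos : (0:ℝ) < ‖x‖ := norm_pos_iff.mpr hxne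
    have h1 : m * ‖x‖^2 ≤ re ⟪S₁ x, x⟫_ℂ := hm x
    have h2 : re ⟪S₁ x, x⟫_ℂ ≤ nS * ‖x‖^2 := by
      calc re ⟪S₁ x, x⟫_ℂ ≤ ‖S₁ x‖ * ‖x‖ := re_inner_le_norm (𝕜 := ℂ) _ _
        _ ≤ (nS * ‖x‖) * ‖x‖ := mul_le_mul_of_nonneg_right (S₁.le_opNorm x) (norm_nonneg _)
        _ = nS * ‖x‖^2 := by ring
    have hx2 : (0:ℝ) < ‖x‖^2 := by positivity
    exact le_of_mul_le_mul_right (by linarith) hx2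
  -- choose t
  set t : ℝ := min (m / nS^2) (2 * (‖S₂‖ + 1))⁻¹ with htdef
  have ht0 : 0 < t := by
    apply lt_min
    · positivity
    · positivity
  have htnS : t * nS^2 ≤ m := by
    have := min_le_left (m / nS^2) (2 * (‖S₂‖ + 1))⁻¹
    rw [← htdef] at this
    calc t * nS^2 ≤ (m / nS^2) * nS^2 := mul_le_mul_of_nonneg_right this (by positivity)
      _ = m := by field_simp
  have htm : t * m ≤ 1 := by
    have h1 : t ≤ m / nS^2 := min_le_left _ _
    have h2 : t * m ≤ (m / nS^2) * m := mul_le_mul_of_nonneg_right h1 (le_of_lt hm0)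
    have h3 : (m / nS^2) * m ≤ 1 := by
      rw [div_mul_eq_mul_div, div_le_one (by positivity)]
      nlinarith
    linarith
  have htS₂ : t * ‖S₂‖ < 1 := by
    have h1 : t ≤ (2 * (‖S₂‖ + 1))⁻¹ := min_le_right _ _
    have h2 : t * ‖S₂‖ ≤ (2 * (‖S₂‖ + 1))⁻¹ * ‖S₂‖ :=
      mul_le_mul_of_nonneg_right h1 (norm_nonneg _)
    have h3 : (2 * (‖S₂‖ + 1))⁻¹ * ‖S₂‖ < 1 := by
      rw [inv_mul_lt_iff₀ (by positivity)]
      nlinarith [norm_nonneg S₂]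
    linarith
  -- contraction bound for 1 - t S₁
  have hq : ∀ x : H₁, ‖(1 - (t:ℂ) • S₁) x‖^2 ≤ (1 - t * m) * ‖x‖^2 := by
    intro x
    have hx1 : (1 - (t:ℂ) • S₁) x = x - (t:ℂ) • (S₁ x) := by simp
    rw [hx1, norm_sub_sq (𝕜 := ℂ)]
    have hre : re ⟪x, (t:ℂ) • S₁ x⟫_ℂ = t * re ⟪S₁ x, x⟫_ℂ := by
      rw [inner_smul_right]
      rw [← hsa₁]
      simp [Complex.mul_re]
    have hnorm : ‖(t:ℂ) • S₁ x‖ = t * ‖S₁ x‖ := by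
      rw [norm_smul]
      simp [abs_of_pos ht0]
    rw [hre, hnorm]
    have hSx : ‖S₁ x‖ ≤ nS * ‖x‖ := S₁.le_opNorm x
    have hSx2 : ‖S₁ x‖^2 ≤ nS^2 * ‖x‖^2 := by nlinarith [norm_nonneg (S₁ x), norm_nonneg x]
    have hmx : m * ‖x‖^2 ≤ re ⟪S₁ x, x⟫_ℂ := hm x
    nlinarith [mul_le_mul_of_nonneg_left hmx ht0.le, mul_le_mul_of_nonneg_left hSx2 (sq_nonneg t),
      mul_le_mul_of_nonneg_right htnS (mul_nonneg ht0.le (sq_nonneg ‖x‖)), sq_nonneg ‖x‖, ht0.le]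
  have h1tm : 0 ≤ 1 - t * m := by
    have : t * m ≤ 1 := htm
    linarith
  set c : ℝ := Real.sqrt (1 - t * m) with hcdef
  have hc1 : c < 1 := by
    have h2 : (0:ℝ) < t * m := mul_pos ht0 hm0
    have h3 : 1 - t * m < 1 ^ 2 := by linarith
    exact hcdef ▸ (Real.sqrt_lt' one_pos).mpr h3
  have hcx : ∀ x : H₁, ‖(1 - (t:ℂ) • S₁) x‖ ≤ c * ‖x‖ := by
    intro x
    have h1 : ‖(1 - (t:ℂ) • S₁) x‖ = Real.sqrt (‖(1 - (t:ℂ) • S₁) x‖^2) := by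
      rw [Real.sqrt_sq (norm_nonneg _)]
    rw [h1]
    calc Real.sqrt (‖(1 - (t:ℂ) • S₁) x‖^2) ≤ Real.sqrt ((1 - t*m) * ‖x‖^2) :=
          Real.sqrt_le_sqrt (hq x)
      _ = c * ‖x‖ := by
          rw [Real.sqrt_mul h1tm, Real.sqrt_sq (norm_nonneg x)]
  -- the unit 1 + t S₂
  have hunorm : ‖-((t:ℂ) • S₂)‖ < 1 := by
    rw [norm_neg, norm_smul]
    simpa [abs_of_pos ht0] using htS₂
  set u : (H₂ →L[ℂ] H₂)ˣ := Units.oneSub (-((t:ℂ) • S₂)) hunorm with hudef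
  have huval : (u : H₂ →L[ℂ] H₂) = 1 + (t:ℂ) • S₂ := by
    rw [hudef, Units.val_oneSub, sub_neg_eq_add]
  have huinv : ∀ y : H₂, ‖((u⁻¹ : (H₂ →L[ℂ] H₂)ˣ) : H₂ →L[ℂ] H₂) y‖ ≤ ‖y‖ := by
    intro y
    set x : H₂ := ((u⁻¹ : (H₂ →L[ℂ] H₂)ˣ) : H₂ →L[ℂ] H₂) y with hxdef
    have hxy : (1 + (t:ℂ) • S₂) x = y := by
      have h0 : ((u : H₂ →L[ℂ] H₂).comp ((u⁻¹ : (H₂ →L[ℂ] H₂)ˣ) : H₂ →L[ℂ] H₂)) y = y := by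
        rw [← mul_def, u.mul_inv, one_def, id_apply]
      rw [← huval, hxdef]
      rw [comp_apply] at h0
      exact h0
    have h1 : ‖x‖^2 ≤ re ⟪(1 + (t:ℂ) • S₂) x, x⟫_ℂ := by
      have hexp : re ⟪(1 + (t:ℂ) • S₂) x, x⟫_ℂ = re ⟪x, x⟫_ℂ + t * re ⟪S₂ x, x⟫_ℂ := by
        simp only [add_apply, smul_apply, one_apply, inner_add_left, inner_smul_left, map_add]
        simp [Complex.mul_re]
      rw [hexp, inner_self_eq_norm_sq]
      have h4 := hS₂pos.re_inner_nonneg_left x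
      have h5 : 0 ≤ t * re ⟪S₂ x, x⟫_ℂ := mul_nonneg ht0.le h4
      linarith
    have h2 : re ⟪(1 + (t:ℂ) • S₂) x, x⟫_ℂ ≤ ‖y‖ * ‖x‖ := by
      rw [hxy]
      exact re_inner_le_norm (𝕜 := ℂ) _ _
    by_cases hx0 : ‖x‖ = 0
    · rw [hx0]; exact norm_nonneg y
    have hxpos : (0:ℝ) < ‖x‖ := lt_of_le_of_ne (norm_nonneg x) (Ne.symm hx0)
    have h3 : ‖x‖ * ‖x‖ ≤ ‖y‖ * ‖x‖ := by rw [← pow_two]; exact h1.trans h2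
    exact le_of_mul_le_mul_right h3 hxpos
  -- the fixed point equation
  have hED : (u : H₂ →L[ℂ] H₂).comp D = D.comp (1 - (t:ℂ) • S₁) := by
    rw [huval]
    ext x
    have hDx : S₂ (D x) + D (S₁ x) = 0 := by
      have := congrArg (fun f => f x) hD
      simpa using this
    have h1 : S₂ (D x) = -(D (S₁ x)) := eq_neg_of_add_eq_zero_left hDx
    simp only [comp_apply, add_apply, sub_apply, smul_apply, one_apply, map_smul]
    rw [h1]
    simp [smul_neg, sub_eq_add_neg]
  have hDfix : D = ((u⁻¹ : (H₂ →L[ℂ] H₂)ˣ) : H₂ →L[ℂ] H₂).comp (D.comp (1 - (t:ℂ) • S₁)) := by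
    rw [← hED, ← comp_assoc, ← mul_def, u.inv_mul, one_def, id_comp]
  have hbound : ∀ x : H₁, ‖D x‖ ≤ (c * ‖D‖) * ‖x‖ := by
    intro x
    conv_lhs => rw [hDfix]
    simp only [comp_apply]
    calc ‖((u⁻¹ : (H₂ →L[ℂ] H₂)ˣ) : H₂ →L[ℂ] H₂) (D ((1 - (t:ℂ) • S₁) x))‖
        ≤ ‖D ((1 - (t:ℂ) • S₁) x)‖ := huinv _
      _ ≤ ‖D‖ * ‖(1 - (t:ℂ) • S₁) x‖ := D.le_opNorm _
      _ ≤ ‖D‖ * (c * ‖x‖) := mul_le_mul_of_nonneg_left (hcx x) (norm_nonneg D)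
      _ = (c * ‖D‖) * ‖x‖ := by ring
  have hDle : ‖D‖ ≤ c * ‖D‖ := by
    apply opNorm_le_bound
    · positivity
    · exact hbound
  have hDnorm : ‖D‖ = 0 := by
    by_contra h
    have hpos : 0 < ‖D‖ := lt_of_le_of_ne (norm_nonneg D) (Ne.symm h)
    linarith [mul_pos (sub_pos.mpr hc1) hpos]
  exact norm_eq_zero.mp hDnorm

/-- For a bounded `A` with Moore–Penrose inverse `B`, `A` admits the
decomposition `A = (I + B*B)^{-1/2} T_{B*}` with
`T_{B*} = B*(I + BB*)^{-1/2} + A(I + BB*)^{-1/2}`. -/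
theorem mp_decomposition (A : H₁ →L[ℂ] H₂) (B : H₂ →L[ℂ] H₁)
    (hB : IsMP A B)
    (S₁ : H₁ →L[ℂ] H₁) (hS₁pos : S₁.IsPositive)
    (hS₁a : (S₁.comp S₁).comp (1 + B.comp (adjoint B)) = 1)
    (hS₁b : (1 + B.comp (adjoint B)).comp (S₁.comp S₁) = 1)
    (S₂ : H₂ →L[ℂ] H₂) (hS₂pos : S₂.IsPositive)
    (hS₂a : (S₂.comp S₂).comp (1 + (adjoint B).comp B) = 1)
    (hS₂b : (1 + (adjoint B).comp B).comp (S₂.comp S₂) = 1) :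
    A = S₂.comp ((adjoint B).comp S₁ + A.comp S₁) := by
  obtain ⟨hABA, hBAB, hpA, hpB⟩ := hB
  set B' : H₁ →L[ℂ] H₂ := adjoint B with hB'def
  -- A ∘ B is self-adjoint
  have hAB : A.comp B = adjoint (A.comp B) := by
    rw [eq_adjoint_iff]
    intro x y
    have key : ∀ u v : H₂, ⟪(A.comp B) u, v⟫_ℂ = ⟪(A.comp B) u, (A.comp B) v⟫_ℂ := by
      intro u v
      have horth := hpA v
      rw [Submodule.mem_orthogonal] at horth
      have h0 : ⟪(A.comp B) u, v - A (B v)⟫_ℂ = 0 := horth _ ⟨B u, rfl⟩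
      rw [inner_sub_right, sub_eq_zero] at h0
      simpa [comp_apply] using h0
    calc ⟪(A.comp B) x, y⟫_ℂ = ⟪(A.comp B) x, (A.comp B) y⟫_ℂ := key x y
      _ = conj ⟪(A.comp B) y, (A.comp B) x⟫_ℂ := by rw [inner_conj_symm]
      _ = conj ⟪(A.comp B) y, x⟫_ℂ := by rw [← key y x]
      _ = ⟪x, (A.comp B) y⟫_ℂ := by rw [inner_conj_symm]
  -- B ∘ A is self-adjoint
  have hBA : B.comp A = adjoint (B.comp A) := by
    rw [eq_adjoint_iff]
    intro x y
    have key : ∀ u v : H₁, ⟪(B.comp A) u, v⟫_ℂ = ⟪(B.comp A) u, (B.comp A) v⟫_ℂ := by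
      intro u v
      have horth := hpB v
      rw [Submodule.mem_orthogonal] at horth
      have h0 : ⟪(B.comp A) u, v - B (A v)⟫_ℂ = 0 := horth _ ⟨A u, rfl⟩
      rw [inner_sub_right, sub_eq_zero] at h0
      simpa [comp_apply] using h0
    calc ⟪(B.comp A) x, y⟫_ℂ = ⟪(B.comp A) x, (B.comp A) y⟫_ℂ := key x y
      _ = conj ⟪(B.comp A) y, (B.comp A) x⟫_ℂ := by rw [inner_conj_symm]
      _ = conj ⟪(B.comp A) y, x⟫_ℂ := by rw [← key y x]
      _ = ⟪x, (B.comp A) y⟫_ℂ := by rw [inner_conj_symm]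
  -- key algebraic identities
  have hABB' : (A.comp B).comp B' = B' := by
    calc (A.comp B).comp B' = (adjoint (A.comp B)).comp (adjoint B) := by rw [← hAB, hB'def]
      _ = adjoint (B.comp (A.comp B)) := (adjoint_comp _ _).symm
      _ = B' := by rw [hBAB]
  have hB'BA : B'.comp (B.comp A) = B' := by
    calc B'.comp (B.comp A) = (adjoint B).comp (adjoint (B.comp A)) := by rw [← hBA, hB'def]
      _ = adjoint ((B.comp A).comp B) := (adjoint_comp _ _).symm
      _ = adjoint (B.comp (A.comp B)) := by rw [comp_assoc]
      _ = B' := by rw [hBAB]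
  set T : H₁ →L[ℂ] H₂ := B' + A with hTdef
  have hA1 : A.comp (1 : H₁ →L[ℂ] H₁) = A := by rw [one_def, comp_id]
  have hT1 : T = A.comp (1 + B.comp B') := by
    rw [comp_add, hA1, ← comp_assoc, hABB', hTdef, add_comm]
  have h1A : (1 : H₂ →L[ℂ] H₂).comp A = A := by rw [one_def, id_comp]
  have hT2 : T = (1 + B'.comp B).comp A := by
    rw [add_comp, h1A, comp_assoc, hB'BA, hTdef, add_comm]
  -- T S₁² = A = S₂² T
  have hTS : T.comp (S₁.comp S₁) = A := by
    calc T.comp (S₁.comp S₁) = (A.comp (1 + B.comp B')).comp (S₁.comp S₁) := by rw [← hT1]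
      _ = A.comp ((1 + B.comp B').comp (S₁.comp S₁)) := comp_assoc _ _ _
      _ = A.comp 1 := by rw [hS₁b]
      _ = A := by rw [one_def, comp_id]
  have hST : (S₂.comp S₂).comp T = A := by
    calc (S₂.comp S₂).comp T = (S₂.comp S₂).comp ((1 + B'.comp B).comp A) := by rw [← hT2]
      _ = ((S₂.comp S₂).comp (1 + B'.comp B)).comp A := (comp_assoc _ _ _).symm
      _ = (1 : H₂ →L[ℂ] H₂).comp A := by rw [hS₂a]
      _ = A := h1A
  -- inverse of S₁
  set R : H₁ →L[ℂ] H₁ := S₁.comp (1 + B.comp B') with hRdef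
  have hR : S₁.comp R = 1 := by
    rw [hRdef, ← comp_assoc]
    exact hS₁a
  have hcomm : S₁.comp (1 + B.comp B') = (1 + B.comp B').comp S₁ := by
    calc S₁.comp (1 + B.comp B')
        = ((1 + B.comp B').comp (S₁.comp S₁)).comp (S₁.comp (1 + B.comp B')) := by
          rw [hS₁b, one_def, id_comp]
      _ = (1 + B.comp B').comp (S₁.comp ((S₁.comp S₁).comp (1 + B.comp B'))) := by
          simp only [comp_assoc]
      _ = (1 + B.comp B').comp (S₁.comp 1) := by rw [hS₁a]
      _ = (1 + B.comp B').comp S₁ := by rw [one_def, comp_id]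
  have hR' : R.comp S₁ = 1 := by
    rw [hRdef, hcomm, comp_assoc]
    exact hS₁b
  have hfin : S₂.comp T = T.comp S₁ :=
    intertwine_of_sq S₁ S₂ hS₁pos hS₂pos R hR hR' T (by rw [hST, hTS])
  -- conclude
  have hgoal : S₂.comp (T.comp S₁) = A := by
    rw [← hfin, ← comp_assoc]
    exact hST
  calc A = S₂.comp (T.comp S₁) := hgoal.symm
    _ = S₂.comp ((B' + A).comp S₁) := by rw [hTdef]
    _ = S₂.comp (B'.comp S₁ + A.comp S₁) := by rw [add_comp]
end

section
/- Let U be a bounded injective operator with dense range from a Hilbert space K into a Hilbert space H₂, and V = U⁻¹ its (closed, densely defined) inverse. Then range(U) = range((I + V*V)^{-1/2}). -/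
variable {K H₂ : Type*}
  [NormedAddCommGroup K] [InnerProductSpace ℂ K] [CompleteSpace K]
  [NormedAddCommGroup H₂] [InnerProductSpace ℂ H₂] [CompleteSpace H₂]

local notation "⟪" x ", " y "⟫" => @inner ℂ _ _ x y

/-- Let `U` be a bounded injective operator with dense range from `K` into
`H₂` and `V = U⁻¹` its closed densely defined inverse (with domain `range U`).
If `S = (I + V*V)^{-1/2}` is the positive bounded square root of the inverse
of `I + V*V`, then `range U = range ((I + V*V)^{-1/2})`. -/
theorem range_embedding_eq_range_sqrt (U : K →L[ℂ] H₂)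
    (hUinj : Function.Injective U)
    (hUdense : Dense (Set.range U))
    (V : H₂ →ₗ.[ℂ] K)
    (hVclosed : V.IsClosed)
    (hVdom : (V.domain : Set H₂) = Set.range U)
    (hVU : ∀ (x : K) (h : U x ∈ V.domain), V ⟨U x, h⟩ = x)
    (S : H₂ →L[ℂ] H₂) (hSpos : S.IsPositive)
    (hS1 : ∀ y : H₂, S (S y) ∈ V.domain)
    (hS2 : ∀ (y : H₂) (h1 : S (S y) ∈ V.domain), V ⟨S (S y), h1⟩ ∈ V.adjoint.domain)
    (hS : ∀ (y : H₂) (h1 : S (S y) ∈ V.domain)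
      (h2 : V ⟨S (S y), h1⟩ ∈ V.adjoint.domain),
      S (S y) + V.adjoint ⟨V ⟨S (S y), h1⟩, h2⟩ = y) :
    Set.range U = Set.range S := by
  have hVdense : Dense (V.domain : Set H₂) := by rw [hVdom]; exact hUdense
  have hadj := LinearPMap.adjoint_isFormalAdjoint hVdense
  have hsym : (S : H₂ →ₗ[ℂ] H₂).IsSymmetric :=
    ContinuousLinearMap.isSelfAdjoint_iff_isSymmetric.mp hSpos.isSelfAdjoint
  have hsym' : ∀ x y : H₂, ⟪S x, y⟫ = ⟪x, S y⟫ := fun x y => hsym x y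
  -- key identity : ‖V S² z‖² = ‖S z‖² - ‖S² z‖²
  have key : ∀ z : H₂,
      ⟪V ⟨S (S z), hS1 z⟩, V ⟨S (S z), hS1 z⟩⟫ = ⟪S z, S z⟫ - ⟪S (S z), S (S z)⟫ := by
    intro z
    have h1 := hS1 z
    have h2 := hS2 z h1
    have hdec := hS z h1 h2
    have hf := hadj ⟨V ⟨S (S z), h1⟩, h2⟩ ⟨S (S z), h1⟩
    have hVd : V.adjoint ⟨V ⟨S (S z), h1⟩, h2⟩ = z - S (S z) := eq_sub_of_add_eq' hdec
    rw [hVd] at hf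
    rw [← hf, inner_sub_left, hsym' z (S z)]
  have hnormsq : ∀ z : H₂, ‖V ⟨S (S z), hS1 z⟩‖ ^ 2 + ‖S (S z)‖ ^ 2 = ‖S z‖ ^ 2 := by
    intro z
    have h := key z
    rw [inner_self_eq_norm_sq_to_K, inner_self_eq_norm_sq_to_K, inner_self_eq_norm_sq_to_K,
      eq_sub_iff_add_eq] at h
    exact_mod_cast h
  have hnorm : ∀ z : H₂, ‖V ⟨S (S z), hS1 z⟩‖ ≤ ‖S z‖ := by
    intro z
    nlinarith [hnormsq z, norm_nonneg (V ⟨S (S z), hS1 z⟩), norm_nonneg (S z),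
      sq_nonneg (‖S (S z)‖)]
  -- S is injective
  have hSinj : Function.Injective S := by
    intro a b hab
    have : ∀ y : H₂, S y = 0 → y = 0 := by
      intro y hy
      have h1 := hS1 y
      have h2 := hS2 y h1
      have hdec := hS y h1 h2
      have e1 : (⟨S (S y), h1⟩ : V.domain) = 0 := Subtype.ext (by simp [hy])
      have e1' : V ⟨S (S y), h1⟩ = 0 := by
        have := congrArg (fun t : V.domain => V t) e1
        simpa [LinearPMap.map_zero] using this
      have e2 : (⟨V ⟨S (S y), h1⟩, h2⟩ : V.adjoint.domain) = 0 := Subtype.ext (by simp [e1'])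
      rw [e2, V.adjoint.map_zero, hy, map_zero, add_zero] at hdec
      exact hdec.symm
    have := this (a - b) (by rw [map_sub, hab, sub_self])
    exact sub_eq_zero.mp this
  -- S has dense range
  have hSdense : Dense (Set.range S) := by
    have : (LinearMap.range (S : H₂ →ₗ[ℂ] H₂) : Set H₂) = Set.range S := by
      rw [LinearMap.coe_range]; ext x; simp
    rw [← this, Submodule.dense_iff_topologicalClosure_eq_top,
      Submodule.topologicalClosure_eq_top_iff]
    rw [Submodule.eq_bot_iff]
    intro x hx
    have hx' : ∀ z : H₂, ⟪S z, x⟫ = 0 := by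
      intro z
      exact hx (S z) (LinearMap.mem_range.mpr ⟨z, by simp⟩)
    have hSx : S x = 0 := by
      have h0 : ⟪S x, S x⟫ = 0 := (hsym' (S x) x).symm.trans (hx' (S x))
      exact inner_self_eq_zero.mp h0
    have := hSinj (hSx.trans (map_zero S).symm)
    exact this
  -- Direction 1 : range S ⊆ V.domain = range U
  have dir1 : ∀ y : H₂, S y ∈ Set.range U := by
    intro y
    obtain ⟨x, hx1, hx2⟩ := mem_closure_iff_seq_limit.mp (hSdense y)
    choose z hz using fun n => hx1 n
    have hz' : Filter.Tendsto (fun n => S (z n)) Filter.atTop (nhds y) := by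
      have : (fun n => S (z n)) = x := funext hz
      rw [this]; exact hx2
    set g : ℕ → K := fun n => V ⟨S (S (z n)), hS1 (z n)⟩ with hg
    have hgdiff : ∀ n m : ℕ, g n - g m = V ⟨S (S (z n - z m)), hS1 (z n - z m)⟩ := by
      intro n m
      have e1 : (⟨S (S (z n)), hS1 (z n)⟩ : V.domain) - ⟨S (S (z m)), hS1 (z m)⟩
          = ⟨S (S (z n - z m)), hS1 (z n - z m)⟩ := Subtype.ext (by simp [map_sub])
      rw [hg]
      dsimp only
      rw [← LinearPMap.map_sub, e1]
    have hcS : CauchySeq (fun n => S (z n)) := hz'.cauchySeq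
    have hcg : CauchySeq g := by
      rw [Metric.cauchySeq_iff] at hcS ⊢
      intro ε hε
      obtain ⟨N, hN⟩ := hcS ε hε
      refine ⟨N, fun n hn m hm => ?_⟩
      have h1 := hN n hn m hm
      rw [dist_eq_norm] at h1 ⊢
      calc ‖g n - g m‖ = ‖V ⟨S (S (z n - z m)), hS1 (z n - z m)⟩‖ := by rw [hgdiff]
        _ ≤ ‖S (z n - z m)‖ := hnorm _
        _ = ‖S (z n) - S (z m)‖ := by rw [map_sub]
        _ < ε := h1
    obtain ⟨w, hw⟩ := cauchySeq_tendsto_of_complete hcg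
    have hmem : ∀ n : ℕ, (S (S (z n)), g n) ∈ V.graph := fun n =>
      V.mem_graph ⟨S (S (z n)), hS1 (z n)⟩
    have htend : Filter.Tendsto (fun n => (S (S (z n)), g n)) Filter.atTop (nhds (S y, w)) :=
      Filter.Tendsto.prodMk_nhds ((S.continuous.tendsto y).comp hz') hw
    have hgr : (S y, w) ∈ V.graph :=
      hVclosed.mem_of_tendsto htend (Filter.Eventually.of_forall hmem)
    obtain ⟨v, hv1, -⟩ := V.mem_graph_iff.mp hgr
    have : S y ∈ V.domain := (show (↑v : H₂) = S y from hv1) ▸ v.2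
    rw [← hVdom]
    exact this
  -- Direction 2 : range U = V.domain ⊆ range S
  have dir2 : ∀ u : H₂, u ∈ Set.range U → u ∈ Set.range S := by
    intro u hu
    have hu' : u ∈ V.domain := by
      have : u ∈ (V.domain : Set H₂) := by rw [hVdom]; exact hu
      exact this
    set C : ℝ := ‖S u‖ + ‖V ⟨u, hu'⟩‖ with hC
    have hbound : ∀ z : H₂, ‖⟪u, z⟫‖ ≤ C * ‖S z‖ := by
      intro z
      have h1 := hS1 z
      have h2 := hS2 z h1
      have hdec := hS z h1 h2
      have e0 : ⟪u, z⟫ = ⟪u, S (S z) + V.adjoint ⟨V ⟨S (S z), h1⟩, h2⟩⟫ := by rw [hdec]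
      have e1 : ⟪u, z⟫ = ⟪u, S (S z)⟫ + ⟪u, V.adjoint ⟨V ⟨S (S z), h1⟩, h2⟩⟫ :=
        e0.trans (inner_add_right _ _ _)
      have e2 : ⟪u, S (S z)⟫ = ⟪S u, S z⟫ := (hsym' u (S z)).symm
      have e3 : ⟪u, V.adjoint ⟨V ⟨S (S z), h1⟩, h2⟩⟫ = ⟪V ⟨u, hu'⟩, V ⟨S (S z), h1⟩⟫ := by
        have hf := hadj ⟨V ⟨S (S z), h1⟩, h2⟩ ⟨u, hu'⟩
        calc ⟪u, V.adjoint ⟨V ⟨S (S z), h1⟩, h2⟩⟫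
            = starRingEnd ℂ ⟪V.adjoint ⟨V ⟨S (S z), h1⟩, h2⟩, u⟫ := (inner_conj_symm _ _).symm
          _ = starRingEnd ℂ ⟪V ⟨S (S z), h1⟩, V ⟨u, hu'⟩⟫ := by rw [hf]
          _ = ⟪V ⟨u, hu'⟩, V ⟨S (S z), h1⟩⟫ := inner_conj_symm _ _
      rw [e1, e2, e3]
      calc ‖⟪S u, S z⟫ + ⟪V ⟨u, hu'⟩, V ⟨S (S z), h1⟩⟫‖
          ≤ ‖⟪S u, S z⟫‖ + ‖⟪V ⟨u, hu'⟩, V ⟨S (S z), h1⟩⟫‖ := norm_add_le _ _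
        _ ≤ ‖S u‖ * ‖S z‖ + ‖V ⟨u, hu'⟩‖ * ‖V ⟨S (S z), h1⟩‖ :=
            add_le_add (norm_inner_le_norm _ _) (norm_inner_le_norm _ _)
        _ ≤ ‖S u‖ * ‖S z‖ + ‖V ⟨u, hu'⟩‖ * ‖S z‖ := by
            gcongr
            exact hnorm z
        _ = C * ‖S z‖ := by ring
    -- build the functional on range S and extend
    set Sl : H₂ →ₗ[ℂ] H₂ := (S : H₂ →ₗ[ℂ] H₂) with hSl
    have hSlinj : Function.Injective Sl := by
      intro a b hab
      exact hSinj hab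
    set M : Submodule ℂ H₂ := LinearMap.range Sl with hM
    set eqv : H₂ ≃ₗ[ℂ] M := LinearEquiv.ofInjective Sl hSlinj with heqv
    set φ₀ : M →ₗ[ℂ] ℂ := ((innerSL ℂ u) : H₂ →ₗ[ℂ] ℂ) ∘ₗ (eqv.symm : M →ₗ[ℂ] H₂) with hφ₀
    have hφ₀bound : ∀ m : M, ‖φ₀ m‖ ≤ C * ‖m‖ := by
      intro m
      have hm : (m : H₂) = S (eqv.symm m) := by
        conv_lhs => rw [← eqv.apply_symm_apply m]
        rw [heqv, LinearEquiv.ofInjective_apply]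
        simp [hSl]
      have : φ₀ m = ⟪u, eqv.symm m⟫ := rfl
      rw [this]
      calc ‖⟪u, eqv.symm m⟫‖ ≤ C * ‖S (eqv.symm m)‖ := hbound _
        _ = C * ‖m‖ := by rw [← hm, ← Submodule.coe_norm]
    have hCpos : 0 ≤ C := add_nonneg (norm_nonneg _) (norm_nonneg _)
    set φ : M →L[ℂ] ℂ := φ₀.mkContinuous C hφ₀bound with hφ
    set e : M →L[ℂ] H₂ := M.subtypeL with he
    have h_e : IsUniformInducing e := isometry_subtype_coe.isUniformInducing
    have h_dense : DenseRange e := by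
      have h1 : Set.range e = (M : Set H₂) := Subtype.range_val
      have h2 : (M : Set H₂) = Set.range S := by
        rw [hM, LinearMap.coe_range]; ext x; simp [hSl]
      rw [DenseRange, h1, h2]
      exact hSdense
    set ψ : H₂ →L[ℂ] ℂ := φ.extend e with hψ
    set w : H₂ := (InnerProductSpace.toDual ℂ H₂).symm ψ with hw
    refine ⟨w, ?_⟩
    refine ext_inner_right ℂ fun z => ?_
    have hmemz : S z ∈ M := LinearMap.mem_range.mpr ⟨z, by simp [hSl]⟩
    have hez : e (⟨S z, hmemz⟩ : M) = S z := rfl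
    have hsymm_z : eqv.symm ⟨S z, hmemz⟩ = z := by
      apply eqv.injective
      rw [eqv.apply_symm_apply]
      exact Subtype.ext (by rw [heqv, LinearEquiv.ofInjective_apply]; simp [hSl])
    calc ⟪S w, z⟫ = ⟪w, S z⟫ := hsym' w z
      _ = ψ (S z) := InnerProductSpace.toDual_symm_apply
      _ = ψ (e ⟨S z, hmemz⟩) := by rw [hez]
      _ = φ ⟨S z, hmemz⟩ := ContinuousLinearMap.extend_eq (f := φ) (e := e) h_dense h_e _
      _ = ⟪u, eqv.symm ⟨S z, hmemz⟩⟫ := rfl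
      _ = ⟪u, z⟫ := by rw [hsymm_z]
  ext x
  constructor
  · exact dir2 x
  · rintro ⟨y, rfl⟩
    exact dir1 y
end

section
/- Let A be a closed densely defined operator from H₁ to H₂. Then (I + AA*)⁻¹ and A*(I + AA*)⁻¹ are everywhere defined bounded operators, (I + AA*)⁻¹ is self-adjoint, and (I + A*A)⁻¹ A* ⊆ A*(I + AA*)⁻¹. -/
variable {H₁ H₂ : Type*}
  [NormedAddCommGroup H₁] [InnerProductSpace ℂ H₁] [CompleteSpace H₁]
  [NormedAddCommGroup H₂] [InnerProductSpace ℂ H₂] [CompleteSpace H₂]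

private theorem pmap_congr {E F : Type*} [AddCommGroup E] [AddCommGroup F]
    [Module ℂ E] [Module ℂ F] (f : E →ₗ.[ℂ] F) {x y : f.domain}
    (h : (x : E) = (y : E)) : f x = f y := by
  congr 1
  exact Subtype.ext h

/-- Von Neumann's theorem for a closed densely defined operator `A` from `H₁`
to `H₂`: the resolvent `R = (I + AA*)⁻¹` is an everywhere defined bounded
self-adjoint operator, `S = A*(I + AA*)⁻¹` is everywhere defined and bounded,
and `(I + A*A)⁻¹ A* ⊆ A*(I + AA*)⁻¹`, i.e. the two operators agree on the
domain of `A*` (here `R' = (I + A*A)⁻¹`). -/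
theorem vonNeumann_resolvents (A : H₁ →ₗ.[ℂ] H₂)
    (hA : A.IsClosed) (hAd : Dense (A.domain : Set H₁)) :
    ∃ (R : H₂ →L[ℂ] H₂) (R' : H₁ →L[ℂ] H₁) (S : H₂ →L[ℂ] H₁),
      IsSelfAdjoint R ∧
      (∀ y : H₂, R y ∈ A.adjoint.domain) ∧
      (∀ (y : H₂) (h1 : R y ∈ A.adjoint.domain), A.adjoint ⟨R y, h1⟩ ∈ A.domain) ∧
      (∀ (y : H₂) (h1 : R y ∈ A.adjoint.domain)
        (h2 : A.adjoint ⟨R y, h1⟩ ∈ A.domain),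
        R y + A ⟨A.adjoint ⟨R y, h1⟩, h2⟩ = y) ∧
      (∀ (y : H₂) (h1 : R y ∈ A.adjoint.domain), S y = A.adjoint ⟨R y, h1⟩) ∧
      (∀ x : H₁, R' x ∈ A.domain) ∧
      (∀ (x : H₁) (h1 : R' x ∈ A.domain), A ⟨R' x, h1⟩ ∈ A.adjoint.domain) ∧
      (∀ (x : H₁) (h1 : R' x ∈ A.domain) (h2 : A ⟨R' x, h1⟩ ∈ A.adjoint.domain),
        R' x + A.adjoint ⟨A ⟨R' x, h1⟩, h2⟩ = x) ∧
      (∀ (y : H₂) (hy : y ∈ A.adjoint.domain), R' (A.adjoint ⟨y, hy⟩) = S y) := by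
  classical
  let e : WithLp 2 (H₁ × H₂) ≃L[ℂ] H₁ × H₂ := WithLp.prodContinuousLinearEquiv 2 ℂ H₁ H₂
  let K : Submodule ℂ (WithLp 2 (H₁ × H₂)) :=
    A.graph.comap (e.toLinearEquiv : WithLp 2 (H₁ × H₂) →ₗ[ℂ] H₁ × H₂)
  have hKmem : ∀ z : WithLp 2 (H₁ × H₂),
      z ∈ K ↔ ∃ x : A.domain, (x : H₁) = z.ofLp.1 ∧ A x = z.ofLp.2 := by
    intro z
    exact A.mem_graph_iff
  have hKc : IsClosed (K : Set (WithLp 2 (H₁ × H₂))) := by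
    have h : (K : Set (WithLp 2 (H₁ × H₂)))
        = (e : WithLp 2 (H₁ × H₂) → H₁ × H₂) ⁻¹' (A.graph : Set (H₁ × H₂)) := rfl
    rw [h]
    exact hA.preimage e.continuous
  haveI : CompleteSpace K := hKc.completeSpace_coe
  -- coordinate arithmetic on the product
  have hsub1 : ∀ a b : WithLp 2 (H₁ × H₂), (a - b).ofLp.1 = a.ofLp.1 - b.ofLp.1 := fun _ _ => rfl
  have hsub2 : ∀ a b : WithLp 2 (H₁ × H₂), (a - b).ofLp.2 = a.ofLp.2 - b.ofLp.2 := fun _ _ => rfl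
  -- the projection
  let Pc : WithLp 2 (H₁ × H₂) →L[ℂ] WithLp 2 (H₁ × H₂) := K.subtypeL.comp (K.orthogonalProjectionOnto)
  have hPcK : ∀ z, Pc z ∈ K := fun z => SetLike.coe_mem _
  have hPcOrth : ∀ z, z - Pc z ∈ Kᗮ := fun z => Submodule.sub_starProjection_mem_orthogonal z
  have hPcUnique : ∀ z v, v ∈ K → z - v ∈ Kᗮ → Pc z = v := fun z v hv hvo =>
    Submodule.eq_starProjection_of_mem_orthogonal hv hvo
  have hPcInner : ∀ u v, (inner ℂ (Pc u) v : ℂ) = inner ℂ u (Pc v) := fun u v =>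
    Submodule.inner_starProjection_left_eq_right K u v
  -- membership in K of graph elements
  have hmemKofx : ∀ x : A.domain, (WithLp.equiv 2 (H₁ × H₂)).symm ((x : H₁), A x) ∈ K := by
    intro x
    rw [hKmem]
    exact ⟨x, rfl, rfl⟩
  -- characterization of the orthogonal complement, forward direction
  have horth1 : ∀ z : WithLp 2 (H₁ × H₂), z ∈ Kᗮ →
      ∃ h : z.ofLp.2 ∈ A.adjoint.domain, A.adjoint ⟨z.ofLp.2, h⟩ = -z.ofLp.1 := by
    intro z hz
    have hkey : ∀ x : A.domain, (inner ℂ (-z.ofLp.1) (x : H₁) : ℂ) = inner ℂ z.ofLp.2 (A x) := by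
      intro x
      have h0 := (Submodule.mem_orthogonal K z).1 hz _ (hmemKofx x)
      have h1 : (inner ℂ ((x : H₁)) z.ofLp.1 : ℂ) + inner ℂ (A x) z.ofLp.2 = 0 := h0
      have h2 : (inner ℂ ((x : H₁)) z.ofLp.1 : ℂ) = -(inner ℂ (A x) z.ofLp.2 : ℂ) :=
        eq_neg_of_add_eq_zero_left h1
      have h3 := congrArg (starRingEnd ℂ) h2
      rw [map_neg, inner_conj_symm, inner_conj_symm] at h3
      rw [inner_neg_left, h3, neg_neg]
    have hd : z.ofLp.2 ∈ A.adjoint.domain :=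
      LinearPMap.mem_adjoint_domain_of_exists _ ⟨-z.ofLp.1, fun x => hkey x⟩
    exact ⟨hd, LinearPMap.adjoint_apply_eq hAd ⟨z.ofLp.2, hd⟩ (fun x => hkey x)⟩
  -- characterization of the orthogonal complement, reverse direction
  have horth2 : ∀ z : WithLp 2 (H₁ × H₂), ∀ h : z.ofLp.2 ∈ A.adjoint.domain,
      A.adjoint ⟨z.ofLp.2, h⟩ = -z.ofLp.1 → z ∈ Kᗮ := by
    intro z h hval
    rw [Submodule.mem_orthogonal]
    intro u hu
    obtain ⟨x, hx1, hx2⟩ := (hKmem u).1 hu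
    have hfa := (LinearPMap.adjoint_isFormalAdjoint hAd) ⟨z.ofLp.2, h⟩ x
    rw [hval] at hfa
    have h4 := congrArg (starRingEnd ℂ) hfa
    rw [inner_conj_symm, inner_conj_symm, inner_neg_right] at h4
    have h5 : (inner ℂ u z : ℂ) = inner ℂ ((x : H₁)) z.ofLp.1 + inner ℂ (A x) z.ofLp.2 := by
      rw [WithLp.prod_inner_apply, ← hx1, ← hx2]
    rw [h5, ← h4]
    ring
  -- the central decomposition lemma
  have key : ∀ z : WithLp 2 (H₁ × H₂),
      ∃ (hg : (Pc z).ofLp.1 ∈ A.domain) (hd : (z - Pc z).ofLp.2 ∈ A.adjoint.domain),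
        A ⟨(Pc z).ofLp.1, hg⟩ = (Pc z).ofLp.2 ∧
        A.adjoint ⟨(z - Pc z).ofLp.2, hd⟩ = -(z - Pc z).ofLp.1 := by
    intro z
    obtain ⟨x, hx1, hx2⟩ := (hKmem _).1 (hPcK z)
    obtain ⟨hd, hval⟩ := horth1 _ (hPcOrth z)
    have hg : (Pc z).ofLp.1 ∈ A.domain := by rw [← hx1]; exact x.2
    refine ⟨hg, hd, ?_, hval⟩
    have := pmap_congr A (x := ⟨(Pc z).ofLp.1, hg⟩) (y := x) hx1.symm
    rw [this, hx2]
  let J₂ : H₂ →L[ℂ] WithLp 2 (H₁ × H₂) :=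
    (e.symm : (H₁ × H₂) →L[ℂ] WithLp 2 (H₁ × H₂)).comp (ContinuousLinearMap.inr ℂ H₁ H₂)
  let J₁ : H₁ →L[ℂ] WithLp 2 (H₁ × H₂) :=
    (e.symm : (H₁ × H₂) →L[ℂ] WithLp 2 (H₁ × H₂)).comp (ContinuousLinearMap.inl ℂ H₁ H₂)
  let P₁ : WithLp 2 (H₁ × H₂) →L[ℂ] H₁ :=
    (ContinuousLinearMap.fst ℂ H₁ H₂).comp (e : WithLp 2 (H₁ × H₂) →L[ℂ] H₁ × H₂)
  let P₂ : WithLp 2 (H₁ × H₂) →L[ℂ] H₂ :=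
    (ContinuousLinearMap.snd ℂ H₁ H₂).comp (e : WithLp 2 (H₁ × H₂) →L[ℂ] H₁ × H₂)
  -- useful coordinate identities
  have hw1 : ∀ y : H₂, -((J₂ y - Pc (J₂ y)).ofLp.1) = (Pc (J₂ y)).ofLp.1 := by
    intro y
    rw [hsub1, show (J₂ y).ofLp.1 = 0 from rfl, zero_sub, neg_neg]
  refine ⟨P₂.comp ((ContinuousLinearMap.id ℂ (WithLp 2 (H₁ × H₂)) - Pc).comp J₂),
      P₁.comp (Pc.comp J₁), P₁.comp (Pc.comp J₂), ?_, ?_, ?_, ?_, ?_, ?_, ?_, ?_, ?_⟩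
  · -- self-adjointness of R
    rw [ContinuousLinearMap.isSelfAdjoint_iff_isSymmetric]
    intro a b
    show (inner ℂ ((J₂ a - Pc (J₂ a)).ofLp.2) b : ℂ) = inner ℂ a ((J₂ b - Pc (J₂ b)).ofLp.2)
    have h1 : (inner ℂ ((J₂ a - Pc (J₂ a)).ofLp.2) b : ℂ) = inner ℂ (J₂ a - Pc (J₂ a)) (J₂ b) := by
      rw [WithLp.prod_inner_apply, show (J₂ b).ofLp.1 = 0 from rfl,
        show (J₂ b).ofLp.2 = b from rfl, inner_zero_right, zero_add]
    have h2 : (inner ℂ a ((J₂ b - Pc (J₂ b)).ofLp.2) : ℂ) = inner ℂ (J₂ a) (J₂ b - Pc (J₂ b)) := by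
      rw [WithLp.prod_inner_apply, show (J₂ a).ofLp.1 = 0 from rfl,
        show (J₂ a).ofLp.2 = a from rfl, inner_zero_left, zero_add]
    rw [h1, h2, inner_sub_left, inner_sub_right, hPcInner]
  · -- R y ∈ dom A†
    intro y
    obtain ⟨hg, hd, hAv, hAdv⟩ := key (J₂ y)
    exact hd
  · -- A† (R y) ∈ dom A
    intro y h1
    obtain ⟨hg, hd, hAv, hAdv⟩ := key (J₂ y)
    have h3 : A.adjoint ⟨_, h1⟩ = A.adjoint ⟨(J₂ y - Pc (J₂ y)).ofLp.2, hd⟩ := pmap_congr _ rfl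
    rw [h3, hAdv, hw1]
    exact hg
  · -- R y + A (A† (R y)) = y
    intro y h1 h2
    obtain ⟨hg, hd, hAv, hAdv⟩ := key (J₂ y)
    have h3 : A.adjoint ⟨_, h1⟩ = A.adjoint ⟨(J₂ y - Pc (J₂ y)).ofLp.2, hd⟩ := pmap_congr _ rfl
    have h4 : A ⟨A.adjoint ⟨_, h1⟩, h2⟩ = A ⟨(Pc (J₂ y)).ofLp.1, hg⟩ := by
      apply pmap_congr
      show A.adjoint ⟨_, h1⟩ = (Pc (J₂ y)).ofLp.1
      rw [h3, hAdv, hw1]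
    show (J₂ y - Pc (J₂ y)).ofLp.2 + A ⟨A.adjoint ⟨_, h1⟩, h2⟩ = y
    rw [h4, hAv, hsub2, show (J₂ y).ofLp.2 = y from rfl, sub_add_cancel]
  · -- S y = A† (R y)
    intro y h1
    obtain ⟨hg, hd, hAv, hAdv⟩ := key (J₂ y)
    have h3 : A.adjoint ⟨_, h1⟩ = A.adjoint ⟨(J₂ y - Pc (J₂ y)).ofLp.2, hd⟩ := pmap_congr _ rfl
    rw [h3, hAdv, hw1]
    exact rfl
  · -- R' x ∈ dom A
    intro x
    obtain ⟨hg, hd, hAv, hAdv⟩ := key (J₁ x)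
    exact hg
  · -- A (R' x) ∈ dom A†
    intro x h1
    obtain ⟨hg, hd, hAv, hAdv⟩ := key (J₁ x)
    have h3 : A ⟨_, h1⟩ = A ⟨(Pc (J₁ x)).ofLp.1, hg⟩ := pmap_congr _ rfl
    have h5 : (Pc (J₁ x)).ofLp.2 = -((J₁ x - Pc (J₁ x)).ofLp.2) := by
      rw [hsub2, show (J₁ x).ofLp.2 = 0 from rfl, zero_sub, neg_neg]
    rw [h3, hAv, h5]
    exact Submodule.neg_mem _ hd
  · -- R' x + A† (A (R' x)) = x
    intro x h1 h2
    obtain ⟨hg, hd, hAv, hAdv⟩ := key (J₁ x)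
    have h3 : A ⟨_, h1⟩ = A ⟨(Pc (J₁ x)).ofLp.1, hg⟩ := pmap_congr _ rfl
    have h5 : (Pc (J₁ x)).ofLp.2 = -((J₁ x - Pc (J₁ x)).ofLp.2) := by
      rw [hsub2, show (J₁ x).ofLp.2 = 0 from rfl, zero_sub, neg_neg]
    have h6 : A.adjoint ⟨A ⟨_, h1⟩, h2⟩
        = A.adjoint (-(⟨(J₁ x - Pc (J₁ x)).ofLp.2, hd⟩ : A.adjoint.domain)) := by
      apply pmap_congr
      show A ⟨_, h1⟩ = -((J₁ x - Pc (J₁ x)).ofLp.2)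
      rw [h3, hAv, h5]
    show (Pc (J₁ x)).ofLp.1 + A.adjoint ⟨A ⟨_, h1⟩, h2⟩ = x
    rw [h6, LinearPMap.map_neg, hAdv, neg_neg, hsub1, show (J₁ x).ofLp.1 = x from rfl]
    abel
  · -- (I + A*A)⁻¹ A* ⊆ A* (I + AA*)⁻¹
    intro y hy
    obtain ⟨hg, hd, hAv, hAdv⟩ := key (J₂ y)
    have hm : (J₁ (A.adjoint ⟨y, hy⟩) - Pc (J₂ y)).ofLp.2 ∈ A.adjoint.domain := by
      have hvv : (J₁ (A.adjoint ⟨y, hy⟩) - Pc (J₂ y)).ofLp.2 = (J₂ y - Pc (J₂ y)).ofLp.2 - y := by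
        rw [hsub2, hsub2, show (J₁ (A.adjoint ⟨y, hy⟩)).ofLp.2 = 0 from rfl,
          show (J₂ y).ofLp.2 = y from rfl]
        abel
      rw [hvv]
      exact Submodule.sub_mem _ hd hy
    have hveq : A.adjoint ⟨(J₁ (A.adjoint ⟨y, hy⟩) - Pc (J₂ y)).ofLp.2, hm⟩
        = -((J₁ (A.adjoint ⟨y, hy⟩) - Pc (J₂ y)).ofLp.1) := by
      have e1 : A.adjoint ⟨(J₁ (A.adjoint ⟨y, hy⟩) - Pc (J₂ y)).ofLp.2, hm⟩
          = A.adjoint ((⟨(J₂ y - Pc (J₂ y)).ofLp.2, hd⟩ : A.adjoint.domain) - ⟨y, hy⟩) := by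
        refine pmap_congr _ ?_
        show (J₁ (A.adjoint ⟨y, hy⟩) - Pc (J₂ y)).ofLp.2 = (J₂ y - Pc (J₂ y)).ofLp.2 - y
        rw [hsub2, hsub2, show (J₁ (A.adjoint ⟨y, hy⟩)).ofLp.2 = 0 from rfl,
          show (J₂ y).ofLp.2 = y from rfl]
        abel
      rw [e1, LinearPMap.map_sub, hAdv, hsub1 (J₂ y), hsub1 (J₁ (A.adjoint ⟨y, hy⟩)),
        show (J₁ (A.adjoint ⟨y, hy⟩)).ofLp.1 = A.adjoint ⟨y, hy⟩ from rfl,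
        show (J₂ y).ofLp.1 = 0 from rfl]
      abel
    have hproj : Pc (J₁ (A.adjoint ⟨y, hy⟩)) = Pc (J₂ y) :=
      hPcUnique _ _ (hPcK (J₂ y)) (horth2 _ hm hveq)
    show (Pc (J₁ (A.adjoint ⟨y, hy⟩))).ofLp.1 = (Pc (J₂ y)).ofLp.1
    rw [hproj]
end
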